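/- arXiv:1704.04448 — 9 statements merged into one kernel-verified Lean document; each statement's English description precedes it below -/
import Mathlib

section
/- Let β : ℕ → ℝ satisfy 0 ≤ β(l) ≤ 1 for all l, and suppose β satisfies the deterministic rarity condition: for every sequence N : ℕ → ℕ with N(m)/√m → ∞ as m → ∞, one has (1/N(m)) · ∑_{l=m}^{m+N(m)} β(l) → 0 as m → ∞. Then the Cesàro averages of β converge to zero: (1/n) · ∑_{l=1}^{n} β(l) → 0 as n → ∞. -/
open Filter Finset

/-- The deterministic rarity condition: for every sequence `N` with `N m / √m → ∞`,
the window averages `(1/N m) ∑_{l=m}^{m+N m} β l` tend to zero. -/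
def RarityCondition (β : ℕ → ℝ) : Prop :=
  ∀ N : ℕ → ℕ,
    Tendsto (fun m => (N m : ℝ) / Real.sqrt m) atTop atTop →
    Tendsto (fun m => (1 / (N m : ℝ)) * ∑ l ∈ Finset.Icc m (m + N m), β l) atTop (nhds 0)

/-- The window-length sequence `N m ≈ m^{3/4}`. -/
noncomputable def Nwin : ℕ → ℕ := fun m => ⌈(m : ℝ) ^ (3/4 : ℝ)⌉₊ + 1

lemma Nwin_pos (m : ℕ) : 0 < Nwin m := Nat.succ_pos _

lemma Nwin_mono : Monotone Nwin := by
  intro a b hab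
  unfold Nwin
  have : (a:ℝ) ^ (3/4:ℝ) ≤ (b:ℝ) ^ (3/4:ℝ) :=
    Real.rpow_le_rpow (Nat.cast_nonneg a) (Nat.cast_le.2 hab) (by norm_num)
  exact Nat.add_le_add_right (Nat.ceil_le_ceil this) 1

lemma Nwin_div_sqrt : Tendsto (fun m : ℕ => (Nwin m : ℝ) / Real.sqrt m) atTop atTop := by
  have hf : Tendsto (fun m : ℕ => (m:ℝ) ^ (1/4:ℝ)) atTop atTop :=
    (tendsto_rpow_atTop (by norm_num : (0:ℝ) < 1/4)).comp tendsto_natCast_atTop_atTop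
  refine tendsto_atTop_mono' atTop ?_ hf
  filter_upwards [eventually_ge_atTop 1] with m hm
  have hm' : (1:ℝ) ≤ (m:ℝ) := by exact_mod_cast hm
  have h0 : (0:ℝ) < m := by linarith
  have hnum : (m:ℝ) ^ (3/4:ℝ) ≤ (Nwin m : ℝ) := by
    have h1 : (m:ℝ) ^ (3/4:ℝ) ≤ (⌈(m : ℝ) ^ (3/4 : ℝ)⌉₊ : ℝ) := Nat.le_ceil _
    have : (Nwin m : ℝ) = (⌈(m : ℝ) ^ (3/4 : ℝ)⌉₊ : ℝ) + 1 := by unfold Nwin; push_cast; ring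
    linarith
  have heq : (m:ℝ) ^ (1/4:ℝ) = (m:ℝ) ^ (3/4:ℝ) / Real.sqrt m := by
    rw [Real.sqrt_eq_rpow, ← Real.rpow_sub h0]
    norm_num
  rw [heq]
  have hs : (0:ℝ) < Real.sqrt m := Real.sqrt_pos.2 h0
  exact div_le_div_of_nonneg_right hnum hs.le |>.trans_eq rfl

lemma Nwin_div_self : Tendsto (fun n : ℕ => (Nwin n : ℝ) / n) atTop (nhds 0) := by
  have hg : Tendsto (fun n : ℕ => (n:ℝ) ^ (-(1/4:ℝ)) + 2 / n) atTop (nhds 0) := by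
    have h1 : Tendsto (fun n : ℕ => (n:ℝ) ^ (-(1/4:ℝ))) atTop (nhds 0) :=
      (tendsto_rpow_neg_atTop (by norm_num : (0:ℝ) < 1/4)).comp tendsto_natCast_atTop_atTop
    have h2 : Tendsto (fun n : ℕ => 2 / (n:ℝ)) atTop (nhds 0) := by
      simpa [div_eq_mul_inv] using (tendsto_one_div_atTop_nhds_zero_nat.const_mul (2:ℝ))
    simpa using h1.add h2
  refine squeeze_zero' ?_ ?_ hg
  · filter_upwards with n
    positivity
  · filter_upwards [eventually_ge_atTop 1] with n hn
    have hn' : (1:ℝ) ≤ (n:ℝ) := by exact_mod_cast hn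
    have h0 : (0:ℝ) < n := by linarith
    have hub : (Nwin n : ℝ) ≤ (n:ℝ) ^ (3/4:ℝ) + 2 := by
      have h1 : (⌈(n : ℝ) ^ (3/4 : ℝ)⌉₊ : ℝ) < (n:ℝ) ^ (3/4:ℝ) + 1 :=
        Nat.ceil_lt_add_one (by positivity)
      have : (Nwin n : ℝ) = (⌈(n : ℝ) ^ (3/4 : ℝ)⌉₊ : ℝ) + 1 := by unfold Nwin; push_cast; ring
      linarith
    have heq : (n:ℝ) ^ (3/4:ℝ) / n = (n:ℝ) ^ (-(1/4:ℝ)) := by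
      rw [div_eq_mul_inv, ← Real.rpow_neg_one, ← Real.rpow_add h0]
      norm_num
    have : (Nwin n : ℝ) / n ≤ ((n:ℝ) ^ (3/4:ℝ) + 2) / n :=
      div_le_div_of_nonneg_right hub h0.le
    calc (Nwin n : ℝ) / n ≤ ((n:ℝ) ^ (3/4:ℝ) + 2) / n := this
      _ = (n:ℝ) ^ (3/4:ℝ) / n + 2 / n := by ring
      _ = (n:ℝ) ^ (-(1/4:ℝ)) + 2 / n := by rw [heq]

/-- if `0 ≤ β l ≤ 1` and `β` satisfies the rarity condition, then the Cesàro
averages of `β` converge to zero. -/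
theorem rarity_implies_cesaro_zero (β : ℕ → ℝ) (hβ : ∀ l, 0 ≤ β l ∧ β l ≤ 1)
    (hrare : RarityCondition β) :
    Tendsto (fun n : ℕ => (1 / (n : ℝ)) * ∑ l ∈ Finset.Icc 1 n, β l) atTop (nhds 0) := by
  rw [NormedAddCommGroup.tendsto_nhds_zero]
  intro ε hε
  set δ : ℝ := min ε 1 with hδdef
  have hδpos : 0 < δ := lt_min hε one_pos
  have hδ1 : δ ≤ 1 := min_le_right _ _
  have hδε : δ ≤ ε := min_le_left _ _
  -- window bound from the rarity condition
  have hwin := hrare Nwin Nwin_div_sqrt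
  rw [NormedAddCommGroup.tendsto_nhds_zero] at hwin
  obtain ⟨M, hM⟩ := (hwin (δ/2) (by positivity)).exists_forall_of_atTop
  have hSwin : ∀ m, M ≤ m → ∑ l ∈ Icc m (m + Nwin m), β l ≤ δ/2 * (Nwin m : ℝ) := by
    intro m hm
    have hNpos : (0:ℝ) < (Nwin m : ℝ) := by exact_mod_cast Nwin_pos m
    have h2 : (1/(Nwin m:ℝ)) * ∑ l ∈ Icc m (m + Nwin m), β l < δ/2 :=
      lt_of_abs_lt (by rw [← Real.norm_eq_abs]; exact hM m hm)
    have h3 : (Nwin m:ℝ) * ((1/(Nwin m:ℝ)) * ∑ l ∈ Icc m (m + Nwin m), β l)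
        ≤ (Nwin m:ℝ) * (δ/2) := mul_le_mul_of_nonneg_left h2.le hNpos.le
    have h4 : (Nwin m:ℝ) * ((1/(Nwin m:ℝ)) * ∑ l ∈ Icc m (m + Nwin m), β l)
        = ∑ l ∈ Icc m (m + Nwin m), β l := by
      field_simp
    linarith
  -- key block-decomposition bound
  have key : ∀ k : ℕ, ∀ m n : ℕ, n - m ≤ k → M ≤ m → m ≤ n →
      ∑ l ∈ Icc m n, β l ≤ δ/2 * ((n:ℝ) + 1 - m) + (Nwin n : ℝ) := by
    intro k
    induction k with
    | zero =>
      intro m n hk hMm hmn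
      have hmn' : m = n := le_antisymm hmn (by omega)
      subst hmn'
      simp only [Icc_self, sum_singleton]
      have h1 : β m ≤ 1 := (hβ m).2
      have h2 : (1:ℝ) ≤ (Nwin m : ℝ) := by exact_mod_cast Nwin_pos m
      have h3 : (0:ℝ) ≤ δ/2 * ((m:ℝ) + 1 - m) := by
        have : ((m:ℝ) + 1 - m) = 1 := by ring
        rw [this]; positivity
      linarith
    | succ k ih =>
      intro m n hk hMm hmn
      by_cases h : n ≤ m + Nwin m
      · have h1 : ∑ l ∈ Icc m n, β l ≤ ∑ l ∈ Icc m (m + Nwin m), β l :=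
          sum_le_sum_of_subset_of_nonneg (Icc_subset_Icc_right h)
            (fun i _ _ => (hβ i).1)
        have h2 := hSwin m hMm
        have h3 : (Nwin m : ℝ) ≤ (Nwin n : ℝ) := by exact_mod_cast Nwin_mono hmn
        have hN0 : (0:ℝ) ≤ (Nwin m : ℝ) := Nat.cast_nonneg _
        have h4 : δ/2 * (Nwin m:ℝ) ≤ (Nwin m:ℝ) := by nlinarith
        have h5 : (0:ℝ) ≤ δ/2 * ((n:ℝ) + 1 - m) := by
          have hm' : (m:ℝ) ≤ n := Nat.cast_le.2 hmn
          nlinarith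
        linarith
      · push_neg at h
        set p := m + Nwin m + 1 with hp
        have hNm : 1 ≤ Nwin m := Nwin_pos m
        have hsplit : ∑ l ∈ Icc m n, β l
            = ∑ l ∈ Icc m (m + Nwin m), β l + ∑ l ∈ Icc p n, β l := by
          rw [← Finset.Ico_add_one_right_eq_Icc m n, ← Finset.Ico_add_one_right_eq_Icc m (m + Nwin m),
            ← Finset.Ico_add_one_right_eq_Icc p n]
          rw [← Finset.sum_Ico_consecutive β (by omega : m ≤ (m + Nwin m) + 1)
            (by omega : (m + Nwin m) + 1 ≤ n + 1)]
        have hpM : M ≤ p := by omega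
        have hpn : p ≤ n := by omega
        have hkp : n - p ≤ k := by omega
        have h2 := hSwin m hMm
        have h3 := ih p n hkp hpM hpn
        have hcast : (p:ℝ) = (m:ℝ) + (Nwin m : ℝ) + 1 := by
          rw [hp]; push_cast; ring
        have e1 : δ/2 * (Nwin m:ℝ) + δ/2 * ((n:ℝ) + 1 - p)
            = δ/2 * ((n:ℝ) - m) := by rw [hcast]; ring
        have e2 : δ/2 * ((n:ℝ) + 1 - m) = δ/2 * ((n:ℝ) - m) + δ/2 := by ring
        rw [hsplit]
        linarith
  -- assemble the Cesàro bound
  set M' := max M 1 with hM'def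
  have hM'1 : 1 ≤ M' := le_max_right _ _
  have key' : ∀ n, M' ≤ n →
      ∑ l ∈ Icc 1 n, β l ≤ (M':ℝ) + δ/2 * ((n:ℝ) + 1) + (Nwin n : ℝ) := by
    intro n hn
    have hsplit : ∑ l ∈ Icc 1 n, β l
        = ∑ l ∈ Ico 1 M', β l + ∑ l ∈ Icc M' n, β l := by
      rw [← Finset.Ico_add_one_right_eq_Icc 1 n, ← Finset.Ico_add_one_right_eq_Icc M' n]
      rw [← Finset.sum_Ico_consecutive β (by omega : 1 ≤ M')
        (by omega : M' ≤ n + 1)]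
    have hbd1 : ∑ l ∈ Ico 1 M', β l ≤ (M':ℝ) := by
      calc ∑ l ∈ Ico 1 M', β l ≤ ∑ _l ∈ Ico 1 M', (1:ℝ) :=
              sum_le_sum (fun i _ => (hβ i).2)
        _ = ((M' - 1 : ℕ) : ℝ) := by simp [Nat.card_Ico]
        _ ≤ (M':ℝ) := by exact_mod_cast Nat.sub_le M' 1
    have hbd2 := key (n - M') M' n le_rfl (le_max_left _ _) hn
    have h5 : δ/2 * ((n:ℝ) + 1 - M') ≤ δ/2 * ((n:ℝ) + 1) := by
      have : (0:ℝ) ≤ (M':ℝ) := Nat.cast_nonneg _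
      nlinarith
    linarith
  -- final limit argument
  have hg : Tendsto
      (fun n : ℕ => (1/(n:ℝ)) * ((M':ℝ) + δ/2 * ((n:ℝ) + 1) + (Nwin n : ℝ)))
      atTop (nhds (δ/2)) := by
    have h1 : Tendsto (fun n : ℕ => 1/(n:ℝ)) atTop (nhds 0) :=
      tendsto_one_div_atTop_nhds_zero_nat
    have h2 : Tendsto
        (fun n : ℕ => (M':ℝ) * (1/(n:ℝ)) + (δ/2 + δ/2 * (1/(n:ℝ))) + (Nwin n : ℝ)/n)
        atTop (nhds ((M':ℝ) * 0 + (δ/2 + δ/2 * 0) + 0)) :=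
      ((h1.const_mul (M':ℝ)).add (tendsto_const_nhds.add (h1.const_mul (δ/2)))).add
        Nwin_div_self
    have h3 : ((M':ℝ) * 0 + (δ/2 + δ/2 * 0) + 0) = δ/2 := by ring
    rw [h3] at h2
    refine Tendsto.congr' ?_ h2
    filter_upwards [eventually_ge_atTop 1] with n hn
    have hn0 : (n:ℝ) ≠ 0 := by
      have : (1:ℝ) ≤ (n:ℝ) := by exact_mod_cast hn
      linarith
    field_simp
  have hlt : ∀ᶠ n : ℕ in atTop,
      (1/(n:ℝ)) * ((M':ℝ) + δ/2 * ((n:ℝ) + 1) + (Nwin n : ℝ)) < ε :=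
    hg.eventually_lt_const (by linarith : δ/2 < ε)
  filter_upwards [eventually_ge_atTop M', eventually_ge_atTop 1, hlt] with n hn hn1 hlt'
  have hn0 : (0:ℝ) < (n:ℝ) := by exact_mod_cast Nat.lt_of_lt_of_le Nat.zero_lt_one hn1
  have hnonneg : 0 ≤ (1/(n:ℝ)) * ∑ l ∈ Icc 1 n, β l :=
    mul_nonneg (by positivity) (sum_nonneg fun i _ => (hβ i).1)
  rw [Real.norm_eq_abs, abs_of_nonneg hnonneg]
  calc (1/(n:ℝ)) * ∑ l ∈ Icc 1 n, β l
      ≤ (1/(n:ℝ)) * ((M':ℝ) + δ/2 * ((n:ℝ) + 1) + (Nwin n : ℝ)) :=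
        mul_le_mul_of_nonneg_left (key' n hn) (by positivity)
    _ < ε := hlt'
end

section
/- Let β : ℕ → ℝ satisfy 0 ≤ β(l) ≤ 1 for all l, and suppose there exists a constant C > 0 such that ∑_{l=1}^{n} β(l) ≤ C·√n for all n ≥ 1. Then β satisfies the deterministic rarity condition: for every sequence N : ℕ → ℕ with N(m)/√m → ∞ as m → ∞, one has (1/N(m)) · ∑_{l=m}^{m+N(m)} β(l) → 0 as m → ∞. -/
open Filter Finset

/-- if `0 ≤ β l ≤ 1` and the partial sums of `β` are `O(√n)`,
then `β` satisfies the rarity condition. -/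
theorem sqrt_bound_implies_rarity (β : ℕ → ℝ) (hβ : ∀ l, 0 ≤ β l ∧ β l ≤ 1)
    (hO : ∃ C : ℝ, 0 < C ∧ ∀ n : ℕ, 1 ≤ n →
      ∑ l ∈ Finset.Icc 1 n, β l ≤ C * Real.sqrt n) :
    RarityCondition β := by
  obtain ⟨C, hC, hsum⟩ := hO
  intro N hN
  -- N m → ∞ as reals
  have hNtop : Tendsto (fun m => (N m : ℝ)) atTop atTop := by
    rw [tendsto_atTop] at hN ⊢
    intro b
    filter_upwards [hN (max b 1), eventually_ge_atTop 1] with m h1 h2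
    have hs : (1:ℝ) ≤ Real.sqrt m := by
      rw [show (1:ℝ) = Real.sqrt 1 by simp]
      exact Real.sqrt_le_sqrt (by exact_mod_cast h2)
    rw [le_div_iff₀ (by linarith)] at h1
    nlinarith [le_max_left b 1, le_max_right b 1]
  -- the bounding sequence
  have h1 : Tendsto (fun (m : ℕ) => Real.sqrt m / (N m : ℝ)) atTop (nhds 0) := by
    have := hN.inv_tendsto_atTop
    have heq : (fun m => ((N m : ℝ) / Real.sqrt m))⁻¹
        = fun (m : ℕ) => Real.sqrt m / (N m : ℝ) := by
      funext m
      simp [Pi.inv_apply, inv_div]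
    rwa [heq] at this
  have hsqtop : Tendsto (fun m => Real.sqrt (N m : ℝ)) atTop atTop := by
    rw [tendsto_atTop] at hNtop ⊢
    intro b
    filter_upwards [hNtop (b ^ 2 ⊔ 0)] with m hm
    have h1 : |b| ≤ Real.sqrt (b ^ 2 ⊔ 0) := by
      rw [← Real.sqrt_sq_eq_abs]
      exact Real.sqrt_le_sqrt (le_max_left _ _)
    have h2 := Real.sqrt_le_sqrt hm
    have := le_abs_self b
    linarith
  have h2 : Tendsto (fun m => 1 / Real.sqrt (N m : ℝ)) atTop (nhds 0) := by
    have := hsqtop.inv_tendsto_atTop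
    simpa [one_div, Pi.inv_def] using this
  have hg : Tendsto (fun (m : ℕ) => C * (Real.sqrt m / (N m : ℝ) + 1 / Real.sqrt ((N m : ℕ) : ℝ)))
      atTop (nhds 0) := by
    have := (h1.add h2).const_mul C
    simpa using this
  refine squeeze_zero' ?_ ?_ hg
  · filter_upwards with m
    have : 0 ≤ ∑ l ∈ Finset.Icc m (m + N m), β l :=
      Finset.sum_nonneg fun l _ => (hβ l).1
    positivity
  · -- eventual upper bound
    have hNpos : ∀ᶠ m in atTop, (1:ℝ) ≤ (N m : ℝ) := hNtop.eventually_ge_atTop 1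
    filter_upwards [hNpos, eventually_ge_atTop 1] with m hNm hm
    have hN0 : (0:ℝ) < (N m : ℝ) := by linarith
    have hsub : Finset.Icc m (m + N m) ⊆ Finset.Icc 1 (m + N m) := by
      apply Finset.Icc_subset_Icc_left hm
    have hb1 : ∑ l ∈ Finset.Icc m (m + N m), β l ≤ ∑ l ∈ Finset.Icc 1 (m + N m), β l :=
      Finset.sum_le_sum_of_subset_of_nonneg hsub (fun l _ _ => (hβ l).1)
    have hb2 : ∑ l ∈ Finset.Icc 1 (m + N m), β l ≤ C * Real.sqrt ((m + N m : ℕ) : ℝ) :=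
      hsum _ (le_add_right hm)
    have hb3 : Real.sqrt ((m : ℝ) + (N m : ℝ)) ≤ Real.sqrt m + Real.sqrt ((N m : ℕ) : ℝ) := by
      have h1 := Real.sq_sqrt (show (0:ℝ) ≤ (m:ℝ) by positivity)
      have h2 := Real.sq_sqrt (show (0:ℝ) ≤ ((N m : ℕ) : ℝ) by positivity)
      have h3 := Real.sqrt_nonneg ((m : ℕ) : ℝ)
      have h4 := Real.sqrt_nonneg ((N m : ℕ) : ℝ)
      calc Real.sqrt ((m : ℝ) + (N m : ℝ))
          ≤ Real.sqrt ((Real.sqrt m + Real.sqrt ((N m : ℕ) : ℝ)) ^ 2) :=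
            Real.sqrt_le_sqrt (by nlinarith)
        _ = Real.sqrt m + Real.sqrt ((N m : ℕ) : ℝ) := Real.sqrt_sq (by positivity)
    have hcast : ((m + N m : ℕ) : ℝ) = (m : ℝ) + (N m : ℝ) := by push_cast; ring
    have key : ∑ l ∈ Finset.Icc m (m + N m), β l ≤ C * (Real.sqrt m + Real.sqrt ((N m : ℕ) : ℝ)) := by
      calc ∑ l ∈ Finset.Icc m (m + N m), β l
          ≤ C * Real.sqrt ((m + N m : ℕ) : ℝ) := le_trans hb1 hb2
        _ ≤ C * (Real.sqrt m + Real.sqrt ((N m : ℕ) : ℝ)) := by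
            rw [hcast]
            exact mul_le_mul_of_nonneg_left hb3 hC.le
    have hsq : Real.sqrt ((N m : ℕ) : ℝ) / (N m : ℝ) = 1 / Real.sqrt ((N m : ℕ) : ℝ) :=
      Real.sqrt_div_self'
    calc 1 / (N m : ℝ) * ∑ l ∈ Finset.Icc m (m + N m), β l
        ≤ 1 / (N m : ℝ) * (C * (Real.sqrt m + Real.sqrt ((N m : ℕ) : ℝ))) := by
          apply mul_le_mul_of_nonneg_left key
          positivity
      _ = C * (Real.sqrt m / (N m : ℝ) + Real.sqrt ((N m : ℕ) : ℝ) / (N m : ℝ)) := by ring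
      _ = C * (Real.sqrt m / (N m : ℝ) + 1 / Real.sqrt ((N m : ℕ) : ℝ)) := by rw [hsq]
end

section
/- Let α ∈ (1/2, 1), η₀ > 0, and define the step sizes η(l) = η₀ / l^α for l ≥ 1 and the step-count function m(n) = min{ k ∈ ℕ : ∑_{l=1}^{k+1} η(l) > n }. Let β : ℕ → ℝ with 0 ≤ β(l) ≤ 1 satisfy the deterministic rarity condition. Then the step-size-weighted sums over consecutive epochs vanish: ∑_{l=m(n)}^{m(n+1)−1} η(l)·β(l) → 0 as n → ∞. -/
set_option maxHeartbeats 1000000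


open Filter Finset

/-- `mIdx η n` is the least `k` such that `∑_{l=1}^{k+1} η l > n`. -/
noncomputable def mIdx (η : ℕ → ℝ) (n : ℕ) : ℕ :=
  sInf {k : ℕ | (n : ℝ) < ∑ l ∈ Finset.Icc 1 (k + 1), η l}

/-- with step sizes `η l = η₀ / l^α`, `α ∈ (1/2,1)`, and `β` satisfying the
rarity condition, the step-size-weighted sums of `β` over consecutive epochs vanish. -/
theorem weighted_epoch_sums_vanish (a η₀ : ℝ) (ha₁ : 1 / 2 < a) (ha₂ : a < 1)
    (hη₀ : 0 < η₀) (η : ℕ → ℝ) (hη : ∀ l : ℕ, 1 ≤ l → η l = η₀ / (l : ℝ) ^ a)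
    (β : ℕ → ℝ) (hβ : ∀ l, 0 ≤ β l ∧ β l ≤ 1) (hrare : RarityCondition β) :
    Tendsto (fun n : ℕ => ∑ l ∈ Finset.Ico (mIdx η n) (mIdx η (n + 1)), η l * β l)
      atTop (nhds 0) := by
  have ha0 : (0:ℝ) ≤ a := by linarith
  set S : ℕ → ℝ := fun k => ∑ l ∈ Finset.Icc 1 k, η l with hSdef
  -- basic positivity facts
  have hcast : ∀ l : ℕ, 1 ≤ l → (1:ℝ) ≤ (l:ℝ) := fun l hl => by exact_mod_cast hl
  have hpow1 : ∀ l : ℕ, 1 ≤ l → (1:ℝ) ≤ (l:ℝ) ^ a := fun l hl =>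
    Real.one_le_rpow (hcast l hl) ha0
  have hpowpos : ∀ l : ℕ, 1 ≤ l → (0:ℝ) < (l:ℝ) ^ a := fun l hl => by
    linarith [hpow1 l hl]
  have hηpos : ∀ l : ℕ, 1 ≤ l → 0 < η l := fun l hl => by
    rw [hη l hl]; exact div_pos hη₀ (hpowpos l hl)
  have hηle : ∀ l : ℕ, 1 ≤ l → η l ≤ η₀ := fun l hl => by
    rw [hη l hl]
    calc η₀ / (l:ℝ) ^ a ≤ η₀ / 1 :=
          div_le_div_of_nonneg_left hη₀.le one_pos (hpow1 l hl)
      _ = η₀ := div_one _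
  have hηmono : ∀ l₁ l₂ : ℕ, 1 ≤ l₁ → l₁ ≤ l₂ → η l₂ ≤ η l₁ := by
    intro l₁ l₂ h1 h12
    rw [hη l₁ h1, hη l₂ (le_trans h1 h12)]
    apply div_le_div_of_nonneg_left hη₀.le (hpowpos l₁ h1)
    exact Real.rpow_le_rpow (by positivity) (by exact_mod_cast h12) ha0
  have hηlow : ∀ l K : ℕ, 1 ≤ l → l ≤ K → η₀ / (K:ℝ) ^ a ≤ η l := by
    intro l K h1 h2
    rw [hη l h1]
    apply div_le_div_of_nonneg_left hη₀.le (hpowpos l h1)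
    exact Real.rpow_le_rpow (by positivity) (by exact_mod_cast h2) ha0
  -- upper bound on partial sums
  have hSle : ∀ k : ℕ, S k ≤ η₀ * k := by
    intro k
    calc S k ≤ ∑ l ∈ Finset.Icc 1 k, η₀ := by
          apply Finset.sum_le_sum
          intro l hl
          exact hηle l (Finset.mem_Icc.mp hl).1
      _ = η₀ * k := by
          rw [Finset.sum_const, Nat.card_Icc]
          simp [mul_comm]
  -- divergence of partial sums
  have hSdiv : Tendsto (fun k => S (k + 1)) atTop atTop := by
    have hhar : Tendsto (fun k : ℕ => η₀ * ∑ i ∈ Finset.range (k + 1), (1 / ((i : ℝ) + 1)))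
        atTop atTop :=
      Tendsto.const_mul_atTop hη₀
        (Real.tendsto_sum_range_one_div_nat_succ_atTop.comp (tendsto_add_atTop_nat 1))
    apply tendsto_atTop_mono _ hhar
    intro k
    have hrw : S (k + 1) = ∑ i ∈ Finset.range (k + 1), η (1 + i) := by
      rw [hSdef]
      have h1 : Finset.Icc 1 (k + 1) = Finset.Ico 1 (k + 2) := by
        exact (Finset.Ico_add_one_right_eq_Icc 1 (k + 1)).symm
      simp only
      rw [h1, Finset.sum_Ico_eq_sum_range]
      norm_num
    rw [hrw, Finset.mul_sum]
    apply Finset.sum_le_sum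
    intro i _
    have h1 : 1 ≤ 1 + i := Nat.le_add_right 1 i
    rw [hη (1 + i) h1]
    have hcast' : ((1 + i : ℕ) : ℝ) = (i:ℝ) + 1 := by push_cast; ring
    rw [hcast', mul_one_div]
    apply div_le_div_of_nonneg_left hη₀.le (by positivity)
    calc ((i:ℝ) + 1) ^ a ≤ ((i:ℝ) + 1) ^ (1:ℝ) :=
          Real.rpow_le_rpow_of_exponent_le (by linarith [Nat.cast_nonneg (α := ℝ) i]) ha₂.le
      _ = (i:ℝ) + 1 := Real.rpow_one _
  -- nonemptiness of the defining sets
  have hne : ∀ n : ℕ, {k : ℕ | (n : ℝ) < S (k + 1)}.Nonempty := by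
    intro n
    obtain ⟨k, hk⟩ := (hSdiv.eventually_gt_atTop (n : ℝ)).exists
    exact ⟨k, hk⟩
  have hmem : ∀ n : ℕ, (n : ℝ) < S (mIdx η n + 1) := fun n => Nat.sInf_mem (hne n)
  have hmin : ∀ n k : ℕ, k < mIdx η n → S (k + 1) ≤ n := by
    intro n k hk
    by_contra h
    push_neg at h
    exact Nat.notMem_of_lt_sInf hk h
  -- mIdx tends to infinity
  have hm_atTop : Tendsto (fun n => mIdx η n) atTop atTop := by
    rw [tendsto_atTop_atTop]
    intro j
    refine ⟨⌈η₀ * ((j:ℝ) + 1)⌉₊, fun n hn => ?_⟩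
    by_contra h
    push_neg at h
    have h1 : (n : ℝ) < S (mIdx η n + 1) := hmem n
    have h2 : S (mIdx η n + 1) ≤ η₀ * ((mIdx η n : ℝ) + 1) := by
      have := hSle (mIdx η n + 1); push_cast at this ⊢; linarith
    have h3 : η₀ * ((mIdx η n : ℝ) + 1) ≤ η₀ * ((j:ℝ) + 1) := by
      have hle : (mIdx η n : ℝ) ≤ (j : ℝ) := by exact_mod_cast h.le
      nlinarith
    have h4 : η₀ * ((j:ℝ) + 1) ≤ (⌈η₀ * ((j:ℝ) + 1)⌉₊ : ℝ) := Nat.le_ceil _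
    have h5 : ((⌈η₀ * ((j:ℝ) + 1)⌉₊ : ℕ) : ℝ) ≤ (n : ℝ) := by exact_mod_cast hn
    linarith
  -- the window function
  obtain ⟨C, hCdef⟩ : ∃ c : ℝ, c = 3 / η₀ + 1 := ⟨_, rfl⟩
  have hC1 : (1:ℝ) ≤ C := by
    rw [hCdef]
    have h : 0 < 3 / η₀ := by positivity
    linarith
  set N : ℕ → ℕ := fun m => ⌈C * (m:ℝ) ^ a⌉₊ with hNdef
  have hNge : ∀ m : ℕ, C * (m:ℝ) ^ a ≤ (N m : ℝ) := fun m => Nat.le_ceil _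
  have hN1 : ∀ m : ℕ, 1 ≤ m → 1 ≤ N m := by
    intro m hm
    show 1 ≤ ⌈C * (m:ℝ) ^ a⌉₊
    rw [Nat.one_le_ceil_iff]
    have := hpowpos m hm
    positivity
  -- N satisfies the rarity growth condition
  have hNgrow : Tendsto (fun m => (N m : ℝ) / Real.sqrt m) atTop atTop := by
    have hbase : Tendsto (fun m : ℕ => (m : ℝ) ^ (a - 1/2)) atTop atTop :=
      (tendsto_rpow_atTop (by linarith)).comp tendsto_natCast_atTop_atTop
    apply tendsto_atTop_mono' atTop _ hbase
    filter_upwards [eventually_ge_atTop 1] with m hm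
    have hm1 : (1:ℝ) ≤ (m:ℝ) := hcast m hm
    have hmpos : (0:ℝ) < (m:ℝ) := by linarith
    have hsq : Real.sqrt (m:ℝ) = (m:ℝ) ^ ((1:ℝ)/2) := Real.sqrt_eq_rpow _
    have hsqpos : (0:ℝ) < Real.sqrt (m:ℝ) := Real.sqrt_pos.mpr hmpos
    rw [Real.rpow_sub hmpos, ← hsq]
    apply div_le_div_of_nonneg_right _ hsqpos.le
    calc (m:ℝ) ^ a ≤ C * (m:ℝ) ^ a := by
          nlinarith [hpowpos m hm]
      _ ≤ (N m : ℝ) := hNge m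
  -- apply the rarity condition
  have hT := hrare N hNgrow
  have hTm := hT.comp hm_atTop
  set T : ℕ → ℝ := fun m => (1 / (N m : ℝ)) * ∑ l ∈ Finset.Icc m (m + N m), β l with hTdef
  have hTnonneg : ∀ m : ℕ, 0 ≤ T m := by
    intro m
    apply mul_nonneg (by positivity)
    exact Finset.sum_nonneg fun l _ => (hβ l).1
  -- threshold for the key epoch-length estimate
  have hKsmall : ∀ᶠ K : ℕ in atTop, (K:ℝ) ^ a ≤ η₀ * K / 2 := by
    have h0 : Tendsto (fun K : ℕ => (K : ℝ) ^ (a - 1)) atTop (nhds 0) := by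
      have := (tendsto_rpow_neg_atTop (y := 1 - a) (by linarith)).comp
        (tendsto_natCast_atTop_atTop (R := ℝ))
      simpa [neg_sub, Function.comp_def] using this
    have hev := h0.eventually (eventually_le_nhds (show (0:ℝ) < η₀/2 by positivity))
    filter_upwards [hev, eventually_ge_atTop 1] with K hK hK1
    have hKpos : (0:ℝ) < (K:ℝ) := by
      have : (1:ℝ) ≤ (K:ℝ) := hcast K hK1
      linarith
    have hrw : (K:ℝ) ^ a = (K:ℝ) ^ (a - 1) * K := by
      rw [← Real.rpow_add_one (ne_of_gt hKpos)]; ring_nf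
    rw [hrw]
    calc (K:ℝ) ^ (a-1) * K ≤ (η₀/2) * K := mul_le_mul_of_nonneg_right hK hKpos.le
      _ = η₀ * K / 2 := by ring
  obtain ⟨M, hM⟩ := hKsmall.exists_forall_of_atTop
  -- key estimate: eventually m(n+1) ≤ m(n) + N(m(n))
  have hkey : ∀ n : ℕ, 1 ≤ mIdx η n → M ≤ mIdx η (n+1) →
      mIdx η (n+1) ≤ mIdx η n + N (mIdx η n) := by
    intro n hk1 hKM
    set k := mIdx η n with hk
    set K := mIdx η (n+1) with hK
    by_cases hcase : K ≤ k + 1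
    · calc K ≤ k + 1 := hcase
        _ ≤ k + N k := by have := hN1 k hk1; omega
    push_neg at hcase
    have hk2K : k + 2 ≤ K := hcase
    have hK1 : 1 ≤ K := by omega
    have hKpow : (0:ℝ) < (K:ℝ)^a := hpowpos K hK1
    -- S K ≤ n + 1
    have hSK : S K ≤ (n:ℝ) + 1 := by
      have hlt : K - 1 < K := by omega
      have h := hmin (n+1) (K-1) hlt
      have heq : K - 1 + 1 = K := by omega
      rw [heq] at h
      push_cast at h
      linarith
    have hSk : (n:ℝ) < S (k+1) := hmem n
    -- the sum over the epoch interior is < 1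
    have hsum : ∑ l ∈ Finset.Ioc (k+1) K, η l < 1 := by
      have hsplit : S (k+1) + ∑ l ∈ Finset.Ioc (k+1) K, η l = S K := by
        have e1 : Finset.Icc 1 (k+1) = Finset.Ioc 0 (k+1) := Finset.Icc_add_one_left_eq_Ioc 0 (k+1)
        have e2 : Finset.Icc 1 K = Finset.Ioc 0 K := Finset.Icc_add_one_left_eq_Ioc 0 K
        show (∑ l ∈ Finset.Icc 1 (k+1), η l) + _ = ∑ l ∈ Finset.Icc 1 K, η l
        rw [e1, e2]
        exact Finset.sum_Ioc_consecutive η (Nat.zero_le _) (by omega)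
      linarith
    have hlower : ((K - (k+1) : ℕ) : ℝ) * (η₀ / (K:ℝ) ^ a) ≤ ∑ l ∈ Finset.Ioc (k+1) K, η l := by
      rw [← Nat.card_Ioc (k+1) K]
      calc ((Finset.Ioc (k+1) K).card : ℝ) * (η₀ / (K:ℝ)^a)
          = ∑ _l ∈ Finset.Ioc (k+1) K, (η₀ / (K:ℝ)^a) := by
            rw [Finset.sum_const, nsmul_eq_mul]
        _ ≤ ∑ l ∈ Finset.Ioc (k+1) K, η l := by
            apply Finset.sum_le_sum
            intro l hl
            obtain ⟨h1, h2⟩ := Finset.mem_Ioc.mp hl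
            exact hηlow l K (by omega) h2
    -- cardinality bound, first pass
    have hxη : ((K - (k+1) : ℕ) : ℝ) * η₀ < (K:ℝ)^a := by
      have h1 : ((K - (k+1) : ℕ) : ℝ) * (η₀ / (K:ℝ)^a) < 1 := lt_of_le_of_lt hlower hsum
      calc ((K - (k+1) : ℕ) : ℝ) * η₀
          = (((K - (k+1) : ℕ) : ℝ) * (η₀ / (K:ℝ)^a)) * (K:ℝ)^a := by
            field_simp
        _ < 1 * (K:ℝ)^a := mul_lt_mul_of_pos_right h1 hKpow
        _ = (K:ℝ)^a := one_mul _
    have hcastsub : ((K - (k+1) : ℕ) : ℝ) = (K:ℝ) - (k:ℝ) - 1 := by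
      have : ((K - (k+1) : ℕ) : ℝ) = (K:ℝ) - ((k+1 : ℕ):ℝ) := by
        exact_mod_cast Nat.cast_sub (by omega)
      rw [this]; push_cast; ring
    have hKa2 : (K:ℝ)^a ≤ η₀ * K / 2 := hM K hKM
    have hK3k : K ≤ 3 * k := by
      have h1 : ((K:ℝ) - (k:ℝ) - 1) * η₀ < η₀ * K / 2 := by
        rw [← hcastsub]; linarith
      have h2 : (K:ℝ) - (k:ℝ) - 1 < (K:ℝ) / 2 := by
        nlinarith
      have h3 : (K:ℝ) < 2 * (k:ℝ) + 2 := by linarith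
      have h4 : K < 2 * k + 2 := by exact_mod_cast h3
      omega
    -- second pass: sharper bound
    have hKa3 : (K:ℝ)^a ≤ 3 * (k:ℝ)^a := by
      have h1 : (K:ℝ)^a ≤ ((3 * k : ℕ):ℝ)^a :=
        Real.rpow_le_rpow (by positivity) (by exact_mod_cast hK3k) ha0
      have h2 : ((3 * k : ℕ):ℝ)^a = (3:ℝ)^a * (k:ℝ)^a := by
        push_cast
        rw [Real.mul_rpow (by norm_num) (by positivity)]
      have h3 : (3:ℝ)^a ≤ 3 := by
        calc (3:ℝ)^a ≤ (3:ℝ)^(1:ℝ) :=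
              Real.rpow_le_rpow_of_exponent_le (by norm_num) ha₂.le
          _ = 3 := Real.rpow_one _
      have hkpow : (0:ℝ) ≤ (k:ℝ)^a := (hpowpos k hk1).le
      calc (K:ℝ)^a ≤ (3:ℝ)^a * (k:ℝ)^a := by rw [← h2]; exact h1
        _ ≤ 3 * (k:ℝ)^a := mul_le_mul_of_nonneg_right h3 hkpow
    have hfinal : ((K - (k+1) : ℕ) : ℝ) < (N k : ℝ) := by
      have hkpow : (0:ℝ) < (k:ℝ)^a := hpowpos k hk1
      have h1 : ((K - (k+1) : ℕ) : ℝ) * η₀ < 3 * (k:ℝ)^a := lt_of_lt_of_le hxη hKa3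
      have hC3 : η₀ * C = 3 + η₀ := by rw [hCdef]; field_simp
      have h2 : (3:ℝ) * (k:ℝ)^a ≤ η₀ * (C * (k:ℝ)^a) := by
        calc (3:ℝ) * (k:ℝ)^a ≤ (3 + η₀) * (k:ℝ)^a := by nlinarith
          _ = (η₀ * C) * (k:ℝ)^a := by rw [hC3]
          _ = η₀ * (C * (k:ℝ)^a) := by ring
      have h3 : ((K - (k+1) : ℕ) : ℝ) * η₀ < η₀ * (N k : ℝ) :=
        lt_of_lt_of_le (lt_of_lt_of_le h1 h2)
          (mul_le_mul_of_nonneg_left (hNge k) hη₀.le)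
      have h4 : ((K - (k+1) : ℕ) : ℝ) * η₀ < (N k : ℝ) * η₀ := by linarith
      exact lt_of_mul_lt_mul_right h4 hη₀.le
    have : K - (k+1) < N k := by exact_mod_cast hfinal
    omega
  -- the main bound
  have hbound : ∀ n : ℕ, 1 ≤ mIdx η n → mIdx η (n+1) ≤ mIdx η n + N (mIdx η n) →
      ∑ l ∈ Finset.Ico (mIdx η n) (mIdx η (n+1)), η l * β l ≤ η₀ * (C + 1) * T (mIdx η n) := by
    intro n hk1 hKN
    set k := mIdx η n with hk
    set K := mIdx η (n+1) with hK
    have hkpow : (0:ℝ) < (k:ℝ)^a := hpowpos k hk1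
    have hNk1 : 1 ≤ N k := hN1 k hk1
    have hNkpos : (0:ℝ) < (N k : ℝ) := by exact_mod_cast hNk1
    have step1 : ∑ l ∈ Finset.Ico k K, η l * β l ≤ η k * ∑ l ∈ Finset.Icc k (k + N k), β l := by
      calc ∑ l ∈ Finset.Ico k K, η l * β l
          ≤ ∑ l ∈ Finset.Ico k K, η k * β l := by
            apply Finset.sum_le_sum
            intro l hl
            obtain ⟨h1, _⟩ := Finset.mem_Ico.mp hl
            exact mul_le_mul_of_nonneg_right (hηmono k l hk1 h1) (hβ l).1
        _ = η k * ∑ l ∈ Finset.Ico k K, β l := by rw [Finset.mul_sum]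
        _ ≤ η k * ∑ l ∈ Finset.Icc k (k + N k), β l := by
            apply mul_le_mul_of_nonneg_left _ (hηpos k hk1).le
            apply Finset.sum_le_sum_of_subset_of_nonneg
            · intro l hl
              obtain ⟨h1, h2⟩ := Finset.mem_Ico.mp hl
              exact Finset.mem_Icc.mpr ⟨h1, by omega⟩
            · intro l _ _
              exact (hβ l).1
    have step2 : ∑ l ∈ Finset.Icc k (k + N k), β l = (N k : ℝ) * T k := by
      have hTk : T k = 1 / (N k : ℝ) * ∑ l ∈ Finset.Icc k (k + N k), β l := rfl
      rw [hTk]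
      field_simp
    have step3 : η k * (N k : ℝ) ≤ η₀ * (C + 1) := by
      rw [hη k hk1]
      have hceil : (N k : ℝ) ≤ C * (k:ℝ)^a + 1 := by
        show ((⌈C * (k:ℝ)^a⌉₊ : ℕ) : ℝ) ≤ C * (k:ℝ)^a + 1
        exact (Nat.ceil_lt_add_one (by positivity)).le
      have h1 : η₀ / (k:ℝ)^a * (N k : ℝ) ≤ η₀ / (k:ℝ)^a * (C * (k:ℝ)^a + 1) := by
        apply mul_le_mul_of_nonneg_left hceil (by positivity)
      have h2 : η₀ / (k:ℝ)^a * (C * (k:ℝ)^a + 1) = η₀ * C + η₀ / (k:ℝ)^a := by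
        field_simp
      have h3 : η₀ / (k:ℝ)^a ≤ η₀ := by
        calc η₀ / (k:ℝ)^a ≤ η₀ / 1 :=
              div_le_div_of_nonneg_left hη₀.le one_pos (hpow1 k hk1)
          _ = η₀ := div_one _
      calc η₀ / (k:ℝ)^a * (N k : ℝ) ≤ η₀ * C + η₀ / (k:ℝ)^a := by rw [← h2]; exact h1
        _ ≤ η₀ * C + η₀ := by linarith
        _ = η₀ * (C + 1) := by ring
    calc ∑ l ∈ Finset.Ico k K, η l * β l
        ≤ η k * ((N k : ℝ) * T k) := by rw [← step2]; exact step1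
      _ = (η k * (N k : ℝ)) * T k := by ring
      _ ≤ η₀ * (C + 1) * T k := mul_le_mul_of_nonneg_right step3 (hTnonneg k)
  -- squeeze
  have hlim : Tendsto (fun n : ℕ => η₀ * (C + 1) * T (mIdx η n)) atTop (nhds 0) := by
    have := hTm.const_mul (η₀ * (C + 1))
    rw [mul_zero] at this
    exact this
  apply tendsto_of_tendsto_of_tendsto_of_le_of_le' tendsto_const_nhds hlim
  · filter_upwards [hm_atTop.eventually_ge_atTop 1] with n hn
    apply Finset.sum_nonneg
    intro l hl
    obtain ⟨h1, _⟩ := Finset.mem_Ico.mp hl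
    exact mul_nonneg (hηpos l (le_trans hn h1)).le (hβ l).1
  · filter_upwards [hm_atTop.eventually_ge_atTop 1,
      (hm_atTop.comp (tendsto_add_atTop_nat 1)).eventually_ge_atTop M] with n h1 h2
    exact hbound n h1 (hkey n h1 h2)
end

section
/- Let K ≥ 1, and let λ_c > 0 and π_c > 0 for c = 1, …, K. Define h(μ, a, b) = (1 − e^{−μa})² + e^{−μa}·(1 − e^{−μb}). Suppose 0 < θ̂^s ≤ θ̂ and θ > 0 satisfy the hit-rate equality ∑_{c=1}^{K} π_c · h(λ_c, θ, 0) = ∑_{c=1}^{K} π_c · h(λ_c, θ̂, θ̂^s). Then θ > θ̂. -/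
/-- Stationary hit probability of an object with Poisson(`μ`) requests under a two-level
TTL cache with deep-cache TTL `a` and shallow-cache TTL `b`:
`h(μ,a,b) = (1 - e^{-μa})² + e^{-μa}(1 - e^{-μb})`. -/
noncomputable def hitProb (μ a b : ℝ) : ℝ :=
  (1 - Real.exp (-μ * a)) ^ 2 + Real.exp (-μ * a) * (1 - Real.exp (-μ * b))

/-- if a full-filtering cache with deep TTL `θ` achieves the same aggregate
hit rate as a cache with TTL pair `(θ̂, θ̂ˢ)` where `0 < θ̂ˢ ≤ θ̂`, then `θ > θ̂`. -/
theorem full_filtering_needs_larger_ttl (K : ℕ) (hK : 1 ≤ K)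
    (lam pi : Fin K → ℝ) (hlam : ∀ c, 0 < lam c) (hpi : ∀ c, 0 < pi c)
    (θhat θhats θ : ℝ) (h1 : 0 < θhats) (h2 : θhats ≤ θhat) (h3 : 0 < θ)
    (heq : ∑ c, pi c * hitProb (lam c) θ 0 = ∑ c, pi c * hitProb (lam c) θhat θhats) :
    θhat < θ := by
  by_contra hle
  push_neg at hle
  have key : ∀ c : Fin K,
      pi c * hitProb (lam c) θ 0 < pi c * hitProb (lam c) θhat θhats := by
    intro c
    apply mul_lt_mul_of_pos_left _ (hpi c)
    have hμ := hlam c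
    have hlt : hitProb (lam c) θ 0 < (1 - Real.exp (-lam c * θhat)) ^ 2 +
        Real.exp (-lam c * θhat) * (1 - Real.exp (-lam c * θhats)) := by
      have e1 : Real.exp (-lam c * θhat) ≤ Real.exp (-lam c * θ) := by
        apply Real.exp_le_exp.2
        nlinarith
      have e2 : Real.exp (-lam c * θ) ≤ 1 := by
        apply Real.exp_le_one_iff.2
        nlinarith
      have e3 : Real.exp (-lam c * θhats) < 1 := by
        apply Real.exp_lt_one_iff.2
        nlinarith
      have e4 : 0 < Real.exp (-lam c * θhat) := Real.exp_pos _
      have sq : (1 - Real.exp (-lam c * θ)) ^ 2 ≤ (1 - Real.exp (-lam c * θhat)) ^ 2 := by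
        nlinarith
      simp only [hitProb, mul_zero, Real.exp_zero]
      nlinarith
    simpa [hitProb] using hlt
  have : ∑ c, pi c * hitProb (lam c) θ 0 < ∑ c, pi c * hitProb (lam c) θhat θhats := by
    apply Finset.sum_lt_sum_of_nonempty
    · exact Finset.univ_nonempty_iff.2 ⟨⟨0, hK⟩⟩
    · intro c _; exact key c
  linarith
end

section
/- Let K ≥ 1 and λ₁ ≥ λ₂ ≥ … ≥ λ_K > 0, and let 0 < θ̂^s ≤ θ̂ < θ. Define Δ_c = h(λ_c, θ̂, θ̂^s) − h(λ_c, θ, 0) for c = 1, …, K, where h(μ, a, b) = (1 − e^{−μa})² + e^{−μa}·(1 − e^{−μb}). Then there exists c* ∈ {0, 1, …, K} such that Δ_c < 0 for all c ≤ c* and Δ_c ≥ 0 for all c > c*. -/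
set_option maxHeartbeats 1000000

namespace HitRateAux

open Real

/-- `-(y log y) ≤ (1 - y²)/2` for `0 < y ≤ 1` (equivalent to `sinh α ≥ α`). -/
lemma neg_mul_log_le {y : ℝ} (h0 : 0 < y) (h1 : y ≤ 1) :
    -(y * Real.log y) ≤ (1 - y ^ 2) / 2 := by
  set α : ℝ := -Real.log y with hα
  have hlog : Real.log y ≤ 0 := Real.log_nonpos h0.le h1
  have hα0 : 0 ≤ α := by simp [hα]; linarith
  have hy : y = Real.exp (-α) := by rw [hα, neg_neg, Real.exp_log h0]
  have hsinh : 2 * α ≤ Real.exp α - Real.exp (-α) := by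
    rcases eq_or_lt_of_le hα0 with h | h
    · simp [← h]
    · have h2 := Real.self_lt_sinh_iff.2 h
      rw [Real.sinh_eq] at h2
      linarith
  have e1 : (0:ℝ) < Real.exp (-α) := Real.exp_pos _
  have e2 : Real.exp α * Real.exp (-α) = 1 := by rw [← Real.exp_add]; simp
  have goal2 : α * Real.exp (-α) ≤ (1 - Real.exp (-α) ^ 2) / 2 := by
    nlinarith [mul_le_mul_of_nonneg_right hsinh e1.le]
  rw [hy, Real.log_exp]
  linarith [goal2]

/-- The key pointwise derivative inequality. -/
lemma deriv_ineq {β γ B X : ℝ} (hβ : 0 < β) (hγ : 0 < γ)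
    (hB : B = Real.exp (-β)) (hX : X = Real.exp (-γ))
    (hreg : B ^ 2 * X ≤ 2 * B - 1) :
    -((2*B - 1 + (1-B)*(X + B*X)) * Real.log (2*B - 1 + (1-B)*(X + B*X)))
      < β*B*(2 - X - B*X) + (1-B)*(γ*X + (β+γ)*(B*X)) := by
  have hB0 : 0 < B := by rw [hB]; exact Real.exp_pos _
  have hX0 : 0 < X := by rw [hX]; exact Real.exp_pos _
  have hB1 : B < 1 := by
    rw [hB]
    calc Real.exp (-β) < Real.exp 0 := Real.exp_lt_exp.2 (by linarith)
    _ = 1 := Real.exp_zero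
  have hX1 : X < 1 := by
    rw [hX]
    calc Real.exp (-γ) < Real.exp 0 := Real.exp_lt_exp.2 (by linarith)
    _ = 1 := Real.exp_zero
  have h1B : 1 - B ≤ β := by
    have := Real.add_one_le_exp (-β); rw [← hB] at this; linarith
  have h1X : 1 - X ≤ γ := by
    have := Real.add_one_le_exp (-γ); rw [← hX] at this; linarith
  have hBhalf : 1/2 < B := by nlinarith [mul_pos (mul_pos hB0 hB0) hX0]
  set Y : ℝ := 2*B - 1 + (1-B)*(X + B*X) with hYdef
  set w : ℝ := 2 - X - B*X with hwdef
  have hw0 : 0 < w := by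
    have : B*X < 1 := by nlinarith
    simp only [hwdef]; nlinarith
  have hYw : Y = 1 - (1-B)*w := by simp only [hYdef, hwdef]; ring
  have hYX : Y - X = (2*B - 1) - B^2*X := by simp only [hYdef]; ring
  have hY0 : 0 < Y := by nlinarith
  have hY1 : Y ≤ 1 := by nlinarith [mul_nonneg (by linarith : (0:ℝ) ≤ 1 - B) hw0.le]
  have hA := neg_mul_log_le hY0 hY1
  -- polynomial part
  have hw2 : w ≤ β + 2*γ := by
    simp only [hwdef]
    nlinarith [mul_nonneg (by linarith : (0:ℝ) ≤ 1-B) (by linarith : (0:ℝ) ≤ 1-X)]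
  have h2w : 2 - w = (1+B)*X := by simp only [hwdef]; ring
  have hmain : (1-B)*((β+2*γ)*(1+B))/2 < γ + (β+γ)*B := by
    nlinarith [mul_pos hβ (show (0:ℝ) < B^2 + 2*B - 1 by nlinarith),
      mul_pos hγ (show (0:ℝ) < B + B^2 by nlinarith)]
  have hfin : (1-B)*w*(2-w)/2 < γ*X + (β+γ)*(B*X) := by
    rw [h2w]
    have hstep : (1-B)*w*((1+B)*X) ≤ (1-B)*(β+2*γ)*((1+B)*X) := by
      apply mul_le_mul_of_nonneg_right _ (by positivity)
      exact mul_le_mul_of_nonneg_left hw2 (by linarith)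
    have hmain' := mul_lt_mul_of_pos_right hmain hX0
    nlinarith [hmain', hstep]
  have hmul : (1-B)*((1-B)*w*(2-w)/2) < (1-B)*(γ*X + (β+γ)*(B*X)) :=
    mul_lt_mul_of_pos_left hfin (by linarith)
  have h5 : (1-B)*B*w ≤ β*B*w :=
    mul_le_mul_of_nonneg_right (mul_le_mul_of_nonneg_right h1B hB0.le) hw0.le
  have hid : (1 - Y^2)/2 = (1-B)*((1-B)*w*(2-w)/2) + (1-B)*B*w := by
    rw [hYw]; ring
  have hpoly : (1 - Y^2)/2 < β*B*w + (1-B)*(γ*X + (β+γ)*(B*X)) := by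
    rw [hid]; nlinarith [hmul, h5]
  calc -(Y * Real.log Y) ≤ (1 - Y^2)/2 := hA
    _ < β*B*w + (1-B)*(γ*X + (β+γ)*(B*X)) := hpoly

/-- The auxiliary function `Y`. -/
noncomputable def Yf (b c s : ℝ) : ℝ :=
  2*Real.exp (-(b*s)) - 1 +
    (1 - Real.exp (-(b*s)))*(Real.exp (-(c*s)) + Real.exp (-(b*s))*Real.exp (-(c*s)))

lemma delta_eq (a b c μ : ℝ) :
    hitProb μ c a - hitProb μ (b+c) 0 =
      Real.exp (-(c*μ)) * (Yf b c μ - Real.exp (-(a*μ))) := by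
  have h1 : Real.exp (-μ * (b+c)) = Real.exp (-(b*μ)) * Real.exp (-(c*μ)) := by
    rw [← Real.exp_add]; congr 1; ring
  have h2 : Real.exp (-μ * c) = Real.exp (-(c*μ)) := by congr 1; ring
  have h3 : Real.exp (-μ * a) = Real.exp (-(a*μ)) := by congr 1; ring
  simp only [hitProb, Yf, mul_zero, neg_zero, Real.exp_zero, h1, h2, h3]
  ring

/-- Down-closedness of the region `B² X ≤ 2B - 1`. -/
lemma region_dc {b c : ℝ} {s' s : ℝ} (hs' : 0 < s') (hss : s' ≤ s)
    (h : (Real.exp (-(b*s)))^2 * Real.exp (-(c*s)) ≤ 2*Real.exp (-(b*s)) - 1) :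
    (Real.exp (-(b*s')))^2 * Real.exp (-(c*s')) ≤ 2*Real.exp (-(b*s')) - 1 := by
  have hs : 0 < s := lt_of_lt_of_le hs' hss
  set t : ℝ := s'/s with ht
  have ht0 : 0 < t := div_pos hs' hs
  have ht1 : t ≤ 1 := (div_le_one hs).2 hss
  have hst : s * t = s' := by rw [ht]; field_simp
  set E : ℝ := Real.exp (-(b*s)) with hE
  set F : ℝ := Real.exp (-(c*s)) with hF
  have hE0 : 0 < E := Real.exp_pos _
  have hF0 : 0 < F := Real.exp_pos _
  have hu0 : 0 ≤ 2*E - 1 := le_trans (by positivity) h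
  have hBt : Real.exp (-(b*s')) = E ^ t := by
    rw [hE, ← Real.exp_mul]; congr 1; rw [← hst]; ring
  have hLt : (Real.exp (-(b*s')))^2 * Real.exp (-(c*s')) = (E^2*F) ^ t := by
    have l1 : (Real.exp (-(b*s')))^2 * Real.exp (-(c*s')) = Real.exp (-((2*b+c)*s) * t) := by
      rw [pow_two, ← Real.exp_add, ← Real.exp_add]; congr 1; rw [← hst]; ring
    have l2 : E^2*F = Real.exp (-((2*b+c)*s)) := by
      rw [hE, hF, pow_two, ← Real.exp_add, ← Real.exp_add]; congr 1; ring
    rw [l1, l2, Real.exp_mul]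
  rw [hLt, hBt]
  have step1 : (E^2*F) ^ t ≤ (2*E - 1) ^ t :=
    Real.rpow_le_rpow (by positivity) h ht0.le
  have step2 : (2*E - 1) ^ t ≤ 2*(E ^ t) - 1 := by
    have hconc := (Real.concaveOn_rpow ht0.le ht1).2 (Set.mem_Ici.2 hu0)
      (Set.mem_Ici.2 (by norm_num : (0:ℝ) ≤ 1))
      (by norm_num : (0:ℝ) ≤ 1/2) (by norm_num : (0:ℝ) ≤ 1/2) (by norm_num)
    simp only [smul_eq_mul, Real.one_rpow] at hconc
    have hmid : (1/2 : ℝ) * (2*E-1) + (1/2) * 1 = E := by ring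
    rw [hmid] at hconc
    linarith
  linarith

lemma hasDerivAt_expNeg (b s : ℝ) :
    HasDerivAt (fun x => Real.exp (-(b*x))) (-b * Real.exp (-(b*s))) s := by
  have h : HasDerivAt (fun x : ℝ => -(b*x)) (-b) s := by
    exact (((hasDerivAt_id s).const_mul b).neg).congr_deriv (by simp)
  simpa [mul_comm] using h.exp

/-- KEY two-point lemma. -/
lemma key {a b c : ℝ} (ha : 0 < a) (hac : a ≤ c) (hb : 0 < b)
    {μ' μ : ℝ} (hμ' : 0 < μ') (hle : μ' ≤ μ)
    (h : Real.exp (-(a*μ)) ≤ Yf b c μ) : Real.exp (-(a*μ')) ≤ Yf b c μ' := by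
  have hc : 0 < c := lt_of_lt_of_le ha hac
  have hμ : 0 < μ := lt_of_lt_of_le hμ' hle
  rcases eq_or_lt_of_le hle with rfl | hlt
  · exact h
  -- region at μ
  have hXY : Real.exp (-(c*μ)) ≤ Yf b c μ := by
    refine le_trans ?_ h
    apply Real.exp_le_exp.2; nlinarith
  have hRμ : (Real.exp (-(b*μ)))^2 * Real.exp (-(c*μ)) ≤ 2*Real.exp (-(b*μ)) - 1 := by
    have hYX : Yf b c μ - Real.exp (-(c*μ)) =
        (2*Real.exp (-(b*μ)) - 1) - (Real.exp (-(b*μ)))^2 * Real.exp (-(c*μ)) := by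
      simp only [Yf]; ring
    linarith
  -- region and positivity on [μ', μ]
  have hreg : ∀ x ∈ Set.Icc μ' μ,
      (Real.exp (-(b*x)))^2 * Real.exp (-(c*x)) ≤ 2*Real.exp (-(b*x)) - 1 := by
    intro x hx
    exact region_dc (lt_of_lt_of_le hμ' hx.1) hx.2 hRμ
  have hYpos : ∀ x ∈ Set.Icc μ' μ, 0 < Yf b c x := by
    intro x hx
    have h1 := hreg x hx
    have hYX : Yf b c x - Real.exp (-(c*x)) =
        (2*Real.exp (-(b*x)) - 1) - (Real.exp (-(b*x)))^2 * Real.exp (-(c*x)) := by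
      simp only [Yf]; ring
    have := Real.exp_pos (-(c*x))
    linarith
  -- L is strictly decreasing on [μ', μ]
  set L : ℝ → ℝ := fun x => Real.log (Yf b c x) / x with hL
  have hYcont : Continuous (Yf b c) := by
    unfold Yf; fun_prop
  have hLanti : StrictAntiOn L (Set.Icc μ' μ) := by
    apply strictAntiOn_of_deriv_neg (convex_Icc μ' μ)
    · apply ContinuousOn.div
      · exact ContinuousOn.log hYcont.continuousOn
          (fun x hx => (hYpos x hx).ne')
      · exact continuousOn_id
      · intro x hx; exact (lt_of_lt_of_le hμ' hx.1).ne'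
    · intro x hx
      rw [interior_Icc] at hx
      have hx0 : 0 < x := lt_of_lt_of_le hμ' hx.1.le
      have hxmem : x ∈ Set.Icc μ' μ := ⟨hx.1.le, hx.2.le⟩
      have hYx : 0 < Yf b c x := hYpos x hxmem
      set B : ℝ := Real.exp (-(b*x)) with hBdef
      set X : ℝ := Real.exp (-(c*x)) with hXdef
      have hE := hasDerivAt_expNeg b x
      have hF := hasDerivAt_expNeg c x
      set D : ℝ := 2*(-b*B) + (-(-b*B)*(X + B*X) +
        (1-B)*((-c*X) + ((-b*B)*X + B*(-c*X)))) with hDdef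
      have hY : HasDerivAt (Yf b c) D x := by
        have t2 := (hE.const_mul 2).sub_const 1
        have t3 := hE.const_sub 1
        have t4 := hE.mul hF
        have t5 := hF.add t4
        have t6 := t3.mul t5
        have t7 := t2.add t6
        exact t7.congr_deriv (by simp only [hDdef, hBdef, hXdef, Pi.add_apply, Pi.mul_apply])
      have hlog : HasDerivAt (fun y => Real.log (Yf b c y)) (D / Yf b c x) x :=
        hY.log hYx.ne'
      have hLD : HasDerivAt L ((D / Yf b c x * x - Real.log (Yf b c x) * 1) / x^2) x :=
        hlog.div (hasDerivAt_id x) hx0.ne'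
      rw [hLD.deriv]
      apply div_neg_of_neg_of_pos _ (by positivity)
      have hineq := deriv_ineq (mul_pos hb hx0) (mul_pos hc hx0) rfl rfl
        (by simpa [hBdef, hXdef] using hreg x hxmem)
      have hYeq : Yf b c x = 2*B - 1 + (1-B)*(X + B*X) := by
        simp only [Yf, hBdef, hXdef]
      have hDx : -(D * x) = (b*x)*B*(2 - X - B*X) + (1-B)*((c*x)*X + (b*x+c*x)*(B*X)) := by
        simp only [hDdef]; ring
      have hkey : D * x < Yf b c x * Real.log (Yf b c x) := by
        rw [hYeq]
        nlinarith [hineq]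
      have : D / Yf b c x * x = D * x / Yf b c x := by ring
      rw [this, mul_one]
      have h2 : D * x / Yf b c x < Real.log (Yf b c x) := by
        rw [div_lt_iff₀ hYx]
        linarith [hkey]
      linarith
  -- conclude
  have hLμ : -a ≤ L μ := by
    have hYμ : 0 < Yf b c μ := hYpos μ ⟨hle, le_refl μ⟩
    have hlog : -(a*μ) ≤ Real.log (Yf b c μ) := (Real.le_log_iff_exp_le hYμ).2 h
    rw [hL]
    rw [le_div_iff₀ hμ]
    linarith
  have hLμ' : L μ < L μ' := hLanti ⟨le_refl μ', hlt.le⟩ ⟨hlt.le, le_refl μ⟩ hlt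
  have hYμ' : 0 < Yf b c μ' := hYpos μ' ⟨le_refl μ', hlt.le⟩
  have : -(a*μ') ≤ Real.log (Yf b c μ') := by
    have h1 : -a ≤ L μ' := by linarith
    rw [hL] at h1
    rw [le_div_iff₀ hμ'] at h1
    linarith
  exact (Real.le_log_iff_exp_le hYμ').1 this

end HitRateAux

/-- with rates `λ₁ ≥ … ≥ λ_K > 0` and TTLs `0 < θ̂ˢ ≤ θ̂ < θ`, the hit-rate
differences `Δ_c = h(λ_c, θ̂, θ̂ˢ) - h(λ_c, θ, 0)` change sign exactly once: there is a
crossover index `c*` with `Δ_c < 0` for the `c*` most popular objects and `Δ_c ≥ 0` for the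
rest. -/
theorem hit_rate_difference_single_crossover (K : ℕ) (hK : 1 ≤ K)
    (lam : Fin K → ℝ) (hpos : ∀ c, 0 < lam c)
    (hsorted : ∀ i j : Fin K, i ≤ j → lam j ≤ lam i)
    (θhat θhats θ : ℝ) (h1 : 0 < θhats) (h2 : θhats ≤ θhat) (h3 : θhat < θ) :
    ∃ cstar : ℕ, cstar ≤ K ∧ ∀ c : Fin K,
      ((c : ℕ) < cstar → hitProb (lam c) θhat θhats - hitProb (lam c) θ 0 < 0) ∧
      (cstar ≤ (c : ℕ) → 0 ≤ hitProb (lam c) θhat θhats - hitProb (lam c) θ 0) := by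
  classical
  set b : ℝ := θ - θhat with hbdef
  have hb : 0 < b := by simp [hbdef]; linarith
  have hdelta : ∀ μ : ℝ, hitProb μ θhat θhats - hitProb μ θ 0 =
      Real.exp (-(θhat*μ)) * (HitRateAux.Yf b θhat μ - Real.exp (-(θhats*μ))) := by
    intro μ
    have := HitRateAux.delta_eq θhats b θhat μ
    rw [show b + θhat = θ by rw [hbdef]; ring] at this
    exact this
  have hsign : ∀ μ : ℝ, (0 ≤ hitProb μ θhat θhats - hitProb μ θ 0 ↔
      Real.exp (-(θhats*μ)) ≤ HitRateAux.Yf b θhat μ) := by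
    intro μ
    rw [hdelta μ]
    constructor
    · intro h
      by_contra hcon
      push_neg at hcon
      have := mul_neg_of_pos_of_neg (Real.exp_pos (-(θhat*μ))) (by linarith :
        HitRateAux.Yf b θhat μ - Real.exp (-(θhats*μ)) < 0)
      linarith
    · intro h
      exact mul_nonneg (Real.exp_pos _).le (by linarith)
  set P : ℕ → Prop := fun n => ∀ c : Fin K,
    (c : ℕ) < n → hitProb (lam c) θhat θhats - hitProb (lam c) θ 0 < 0 with hP
  have hP0 : P 0 := fun c hc => absurd hc (Nat.not_lt_zero _)
  refine ⟨Nat.findGreatest P K, Nat.findGreatest_le K, fun c => ⟨fun hc => ?_, fun hc => ?_⟩⟩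
  · exact Nat.findGreatest_spec (Nat.zero_le K) hP0 c hc
  · by_contra hneg
    push_neg at hneg
    have hΔc : hitProb (lam c) θhat θhats - hitProb (lam c) θ 0 < 0 := hneg
    · have hPc : P ((c : ℕ) + 1) := by
        intro j hj
        have hjc : j ≤ c := by
          rw [Fin.le_def]; omega
        have hlam : lam c ≤ lam j := hsorted j c hjc
        by_contra hj2
        push_neg at hj2
        have hYj : Real.exp (-(θhats * lam j)) ≤ HitRateAux.Yf b θhat (lam j) :=
          (hsign (lam j)).1 hj2
        have hYc := HitRateAux.key h1 h2 hb (hpos c) hlam hYj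
        exact absurd ((hsign (lam c)).2 hYc) (not_le.2 hΔc)
      have hle : (c : ℕ) + 1 ≤ Nat.findGreatest P K :=
        Nat.le_findGreatest c.isLt hPc
      omega
end

section
/- (Lemma 1, byte hit rate version.) Let K ≥ 1, λ > 0, L > 0; let π₁ ≥ π₂ ≥ … ≥ π_K > 0 with α ≥ 0 and α + ∑_c π_c = 1, and set λ_c = λ·π_c. Let w₁ ≥ w₂ ≥ … ≥ w_K > 0 be the object sizes and w̄ > 0 the rare-object size. Define h(μ, a, b) = (1 − e^{−μa})² + e^{−μa}·(1 − e^{−μb}), the byte hit rate H_b(a, b) = (∑_c w_c·π_c·h(λ_c, a, b)) / (w̄·α + ∑_c w_c·π_c), and the normalized size S(a, b) = (∑_c w_c·h(λ_c, a, b) + w̄·α·λ·b) / (λ·(w̄·α + ∑_c w_c·π_c)). Suppose 0 < θ̂^s ≤ θ̂ ≤ L and 0 < θ ≤ L satisfy H_b(θ̂, θ̂^s) = H_b(θ, 0). Then S(θ, 0) ≤ S(θ̂, θ̂^s); moreover, if α > 0 then S(θ, 0) < S(θ̂, θ̂^s). -/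
/-- Byte hit rate of the type under TTL pair `(a,b)`. -/
noncomputable def byteHitRate (K : ℕ) (lam0 alpha wbar : ℝ) (pi w : Fin K → ℝ)
    (a b : ℝ) : ℝ :=
  (∑ c, w c * pi c * hitProb (lam0 * pi c) a b) / (wbar * alpha + ∑ c, w c * pi c)

/-- Normalized size of the type under TTL pair `(a,b)`. -/
noncomputable def normSize (K : ℕ) (lam0 alpha wbar : ℝ) (pi w : Fin K → ℝ)
    (a b : ℝ) : ℝ :=
  (∑ c, w c * hitProb (lam0 * pi c) a b + wbar * alpha * lam0 * b) /
    (lam0 * (wbar * alpha + ∑ c, w c * pi c))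

/- ------------------------------------------------------------------ -/
/- Auxiliary development: the difference function and its derivatives  -/
/- ------------------------------------------------------------------ -/

/-- `gFun a b c ν = hitProb ν a b - hitProb ν c 0` (with the shallow-TTL-0 part
written explicitly). -/
noncomputable def gFun (a b c ν : ℝ) : ℝ :=
  (1 - Real.exp (-ν * a)) ^ 2 + Real.exp (-ν * a) * (1 - Real.exp (-ν * b))
    - (1 - Real.exp (-ν * c)) ^ 2

/-- First derivative of `gFun a b c`. -/
noncomputable def gFun' (a b c ν : ℝ) : ℝ :=
  2 * a * Real.exp (-ν * a) * (1 - Real.exp (-ν * a))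
    - a * Real.exp (-ν * a) * (1 - Real.exp (-ν * b))
    + b * (Real.exp (-ν * a) * Real.exp (-ν * b))
    - 2 * c * Real.exp (-ν * c) * (1 - Real.exp (-ν * c))

/-- Second derivative of `gFun a b c`. -/
noncomputable def gFun'' (a b c ν : ℝ) : ℝ :=
  -a ^ 2 * Real.exp (-ν * a) + 4 * a ^ 2 * (Real.exp (-ν * a)) ^ 2
    - (a + b) ^ 2 * (Real.exp (-ν * a) * Real.exp (-ν * b))
    + 2 * c ^ 2 * Real.exp (-ν * c) - 4 * c ^ 2 * (Real.exp (-ν * c)) ^ 2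

private lemma exp_ineq1 (u : ℝ) : 1 - Real.exp (-u) ≤ u := by
  nlinarith [Real.add_one_le_exp (-u)]

private lemma exp_ineq2 (u : ℝ) : u * Real.exp (-u) ≤ 1 - Real.exp (-u) := by
  have h := Real.add_one_le_exp u
  have he : Real.exp (-u) * Real.exp u = 1 := by
    rw [← Real.exp_add]; simp
  nlinarith [Real.exp_pos (-u), mul_le_mul_of_nonneg_left h (Real.exp_pos (-u)).le]

private lemma hd_exp (k ν : ℝ) :
    HasDerivAt (fun t : ℝ => Real.exp (-t * k)) (-k * Real.exp (-ν * k)) ν := by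
  have h : HasDerivAt (fun t : ℝ => -t * k) (-k) ν := by
    simpa using ((hasDerivAt_id ν).neg.mul_const k)
  have := h.exp
  convert this using 1
  ring

private lemma hasDerivAt_gFun (a b c ν : ℝ) :
    HasDerivAt (gFun a b c) (gFun' a b c ν) ν := by
  have ha := hd_exp a ν
  have hb := hd_exp b ν
  have hc := hd_exp c ν
  have H := (((ha.const_sub 1).pow 2).add (ha.mul (hb.const_sub 1))).sub
    ((hc.const_sub 1).pow 2)
  have hEq : gFun' a b c ν =
      (↑2 * (1 - Real.exp (-ν * a)) ^ (2 - 1) * -(-a * Real.exp (-ν * a)) +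
        (-a * Real.exp (-ν * a) * (1 - Real.exp (-ν * b)) +
          Real.exp (-ν * a) * -(-b * Real.exp (-ν * b)))) -
      ↑2 * (1 - Real.exp (-ν * c)) ^ (2 - 1) * -(-c * Real.exp (-ν * c)) := by
    unfold gFun'
    norm_num
    ring
  rw [hEq]
  exact H

private lemma hasDerivAt_gFun' (a b c ν : ℝ) :
    HasDerivAt (gFun' a b c) (gFun'' a b c ν) ν := by
  have ha := hd_exp a ν
  have hb := hd_exp b ν
  have hc := hd_exp c ν
  have T1 := (ha.const_mul (2 * a)).mul (ha.const_sub 1)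
  have T2 := (ha.const_mul a).mul (hb.const_sub 1)
  have T3 := (ha.mul hb).const_mul b
  have T4 := (hc.const_mul (2 * c)).mul (hc.const_sub 1)
  have H := ((T1.sub T2).add T3).sub T4
  have hEq : gFun'' a b c ν =
      ((2 * a * (-a * Real.exp (-ν * a)) * (1 - Real.exp (-ν * a)) +
          2 * a * Real.exp (-ν * a) * -(-a * Real.exp (-ν * a)) -
          (a * (-a * Real.exp (-ν * a)) * (1 - Real.exp (-ν * b)) +
            a * Real.exp (-ν * a) * -(-b * Real.exp (-ν * b)))) +
        b * (-a * Real.exp (-ν * a) * Real.exp (-ν * b) +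
          Real.exp (-ν * a) * (-b * Real.exp (-ν * b)))) -
      (2 * c * (-c * Real.exp (-ν * c)) * (1 - Real.exp (-ν * c)) +
        2 * c * Real.exp (-ν * c) * -(-c * Real.exp (-ν * c))) := by
    unfold gFun''
    ring
  rw [hEq]
  exact H

private lemma gFun_cont (a b c : ℝ) : Continuous (gFun a b c) := by
  unfold gFun
  fun_prop

private lemma gFun'_cont (a b c : ℝ) : Continuous (gFun' a b c) := by
  unfold gFun'
  fun_prop

private lemma gFun_zero (a b c : ℝ) : gFun a b c 0 = 0 := by
  unfold gFun
  simp

/-- Claim A (filtering regime `c ≤ a + b`): at any positive zero of `gFun`,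
 the derivative is strictly negative. -/
private lemma claimA (a b c ν : ℝ) (hb : 0 < b) (hba : b ≤ a) (hac : a < c)
    (hcab : c ≤ a + b) (hν : 0 < ν) (h0 : gFun a b c ν = 0) : gFun' a b c ν < 0 := by
  have ha : 0 < a := lt_of_lt_of_le hb hba
  set x := Real.exp (-ν * a) with hxdef
  set y := Real.exp (-ν * b) with hydef
  set z := Real.exp (-ν * c) with hzdef
  have hx0 : 0 < x := Real.exp_pos _
  have hy0 : 0 < y := Real.exp_pos _
  have hz0 : 0 < z := Real.exp_pos _
  have hx1 : x < 1 := by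
    rw [hxdef]
    apply Real.exp_lt_one_iff.mpr
    nlinarith
  have hzx : z < x := by
    rw [hxdef, hzdef]
    apply Real.exp_lt_exp.mpr
    nlinarith
  have hxy : x * y = Real.exp (-ν * (a + b)) := by
    rw [hxdef, hydef, ← Real.exp_add]; ring_nf
  have hzu : z * Real.exp (-(ν * (a + b - c))) = x * y := by
    rw [hzdef, hxy, ← Real.exp_add]; ring_nf
  have key1 : ν * (a + b - c) * (x * y) ≤ z - x * y := by
    have h := exp_ineq2 (ν * (a + b - c))
    have h2 := mul_le_mul_of_nonneg_left h hz0.le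
    calc ν * (a + b - c) * (x * y)
        = z * (ν * (a + b - c) * Real.exp (-(ν * (a + b - c)))) := by
          rw [← hzu]; ring
      _ ≤ z * (1 - Real.exp (-(ν * (a + b - c)))) := h2
      _ = z - x * y := by rw [← hzu]; ring
  have key2 : x - z ≤ ν * (c - a) * x := by
    have h := exp_ineq1 (ν * (c - a))
    have hxz : x * Real.exp (-(ν * (c - a))) = z := by
      rw [hxdef, hzdef, ← Real.exp_add]; ring_nf
    have h2 := mul_le_mul_of_nonneg_left h hx0.le
    calc x - z = x * (1 - Real.exp (-(ν * (c - a)))) := by rw [← hxz]; ring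
      _ ≤ x * (ν * (c - a)) := h2
      _ = ν * (c - a) * x := by ring
  have h0' : (1 - x) ^ 2 + x * (1 - y) - (1 - z) ^ 2 = 0 := h0
  have key3 : (x - z) * (1 - x - z) = z - x * y := by linear_combination -h0'
  have key4 : x * y ≤ z := by
    rw [hxy, hzdef]
    apply Real.exp_le_exp.mpr
    nlinarith
  have key5 : 0 ≤ 1 - x - z := by
    by_contra hcon
    push_neg at hcon
    nlinarith [mul_neg_of_pos_of_neg (sub_pos.mpr hzx) hcon]
  have chain : (a + b - c) * (x * y) ≤ (c - a) * (x * (1 - x - z)) := by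
    have step1 : ν * ((a + b - c) * (x * y)) ≤ ν * ((c - a) * (x * (1 - x - z))) := by
      have h2 : (x - z) * (1 - x - z) ≤ ν * (c - a) * x * (1 - x - z) :=
        mul_le_mul_of_nonneg_right key2 key5
      calc ν * ((a + b - c) * (x * y)) = ν * (a + b - c) * (x * y) := by ring
        _ ≤ z - x * y := key1
        _ = (x - z) * (1 - x - z) := key3.symm
        _ ≤ ν * (c - a) * x * (1 - x - z) := h2
        _ = ν * ((c - a) * (x * (1 - x - z))) := by ring
    exact le_of_mul_le_mul_left step1 hν
  have hId : gFun' a b c ν =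
      -((c - a) * (x * (1 - x - z))) - (x - z) * (a * x + c * z)
        + (a + b - c) * (x * y) - c * gFun a b c ν := by
    unfold gFun gFun'
    ring
  rw [hId, h0]
  have hpos : 0 < (x - z) * (a * x + c * z) := by
    apply mul_pos (sub_pos.mpr hzx)
    have h1 : 0 < a * x := mul_pos ha hx0
    have h2 : 0 < c * z := mul_pos (ha.trans hac) hz0
    linarith
  nlinarith [chain]

/-- Single crossing in the filtering regime `c ≤ a + b`. -/
private lemma crossing1 (a b c : ℝ) (hb : 0 < b) (hba : b ≤ a) (hac : a < c)
    (hcab : c ≤ a + b) {ν₁ ν₂ : ℝ} (hν₁ : 0 < ν₁) (h12 : ν₁ ≤ ν₂)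
    (hneg : gFun a b c ν₁ < 0) : gFun a b c ν₂ ≤ 0 := by
  by_contra hcon
  push_neg at hcon
  have hlt : ν₁ < ν₂ := by
    rcases lt_or_eq_of_le h12 with h | h
    · exact h
    · rw [h] at hneg; linarith
  have hcont := gFun_cont a b c
  set S := {t : ℝ | t ∈ Set.Icc ν₁ ν₂ ∧ gFun a b c t ≤ 0} with hSdef
  have hSclosed : IsClosed S := by
    apply IsClosed.inter isClosed_Icc
    exact isClosed_le hcont continuous_const
  have hSsub : S ⊆ Set.Icc ν₁ ν₂ := fun t ht => ht.1
  have hScpt : IsCompact S := isCompact_Icc.of_isClosed_subset hSclosed hSsub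
  have hSne : S.Nonempty := ⟨ν₁, ⟨le_refl _, h12⟩, hneg.le⟩
  set ζ := sSup S with hζdef
  have hζS : ζ ∈ S := hScpt.sSup_mem hSne
  have hζν₂ : ζ < ν₂ := by
    rcases lt_or_eq_of_le hζS.1.2 with h | h
    · exact h
    · exfalso; have := hζS.2; rw [h] at this; linarith
  have hζν₁ : ν₁ ≤ ζ := hζS.1.1
  have hζpos : 0 < ζ := lt_of_lt_of_le hν₁ hζν₁
  have hright : ∀ t, t ∈ Set.Ioc ζ ν₂ → 0 < gFun a b c t := by
    intro t ht
    by_contra hcon2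
    push_neg at hcon2
    have htS : t ∈ S := ⟨⟨le_trans hζν₁ ht.1.le, ht.2⟩, hcon2⟩
    have := le_csSup hScpt.bddAbove htS
    exact absurd this (not_le.mpr ht.1)
  have hζ0 : gFun a b c ζ = 0 := by
    refine le_antisymm hζS.2 ?_
    have htend : Filter.Tendsto (gFun a b c) (nhdsWithin ζ (Set.Ioi ζ)) (nhds (gFun a b c ζ)) :=
      (hcont.continuousAt).continuousWithinAt
    have hev : ∀ᶠ t in nhdsWithin ζ (Set.Ioi ζ), 0 ≤ gFun a b c t := by
      filter_upwards [Ioc_mem_nhdsGT_of_mem ⟨le_refl ζ, hζν₂⟩] with t ht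
      exact (hright t ht).le
    exact ge_of_tendsto htend hev
  have hder : gFun' a b c ζ < 0 := claimA a b c ζ hb hba hac hcab hζpos hζ0
  have hslope := hasDerivAt_iff_tendsto_slope.mp (hasDerivAt_gFun a b c ζ)
  have hev1 : ∀ᶠ t in nhdsWithin ζ {ζ}ᶜ, slope (gFun a b c) ζ t < 0 :=
    hslope.eventually_lt_const hder
  have hmono : nhdsWithin ζ (Set.Ioi ζ) ≤ nhdsWithin ζ {ζ}ᶜ := by
    apply nhdsWithin_mono
    intro t ht
    exact ne_of_gt ht
  have hev2 : ∀ᶠ t in nhdsWithin ζ (Set.Ioi ζ), slope (gFun a b c) ζ t < 0 :=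
    hev1.filter_mono hmono
  have hev3 : ∀ᶠ t in nhdsWithin ζ (Set.Ioi ζ), t ∈ Set.Ioc ζ ν₂ :=
    Ioc_mem_nhdsGT_of_mem ⟨le_refl ζ, hζν₂⟩
  obtain ⟨t, hst, htIoc⟩ := (hev2.and hev3).exists
  have hslope_val : slope (gFun a b c) ζ t = (gFun a b c t - gFun a b c ζ) / (t - ζ) := by
    rw [slope_def_field]
  rw [hslope_val, hζ0, sub_zero] at hst
  have htζ : 0 < t - ζ := sub_pos.mpr htIoc.1
  have hneg' : gFun a b c t < 0 := by
    have hmul := mul_neg_of_neg_of_pos hst htζ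
    rwa [div_mul_cancel₀ _ (ne_of_gt htζ)] at hmul
  exact absurd hneg' (not_lt.mpr (hright t htIoc).le)

/-- Single crossing in the non-filtering regime `a + b ≤ c`. -/
private lemma crossing2 (a b c : ℝ) (hb : 0 < b) (hba : b ≤ a) (hac : a < c)
    (hcab : a + b ≤ c) {ν₁ ν₂ : ℝ} (hν₁ : 0 < ν₁) (h12 : ν₁ ≤ ν₂)
    (hneg : gFun a b c ν₁ < 0) : gFun a b c ν₂ ≤ 0 := by
  have ha : 0 < a := lt_of_lt_of_le hb hba
  by_contra hcon
  push_neg at hcon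
  have hlt : ν₁ < ν₂ := by
    rcases lt_or_eq_of_le h12 with h | h
    · exact h
    · rw [h] at hneg; linarith
  set E := fun t : ℝ => Real.exp ((a + b) * t) * gFun a b c t with hEdef
  have hE : ∀ t : ℝ, HasDerivAt E
      (Real.exp ((a + b) * t) * (gFun' a b c t + (a + b) * gFun a b c t)) t := by
    intro t
    have h0 : HasDerivAt (fun s : ℝ => (a + b) * s) (a + b) t := by
      simpa using (hasDerivAt_id t).const_mul (a + b)
    have h1 := h0.exp
    have h2 := h1.mul (hasDerivAt_gFun a b c t)
    exact h2.congr_deriv (by ring)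
  have hEcont : Continuous E := by
    apply Continuous.mul
    · exact Real.continuous_exp.comp (continuous_const.mul continuous_id)
    · exact gFun_cont a b c
  have hE0 : E 0 = 0 := by
    rw [hEdef]; simp [gFun_zero]
  have hEν₁ : E ν₁ < 0 := mul_neg_of_pos_of_neg (Real.exp_pos _) hneg
  have hEν₂ : 0 < E ν₂ := mul_pos (Real.exp_pos _) hcon
  obtain ⟨ζ₁, hζ₁mem, hζ₁⟩ := exists_hasDerivAt_eq_slope E _ hν₁
    (hEcont.continuousOn) (fun t _ => hE t)
  obtain ⟨ζ₂, hζ₂mem, hζ₂⟩ := exists_hasDerivAt_eq_slope E _ hlt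
    (hEcont.continuousOn) (fun t _ => hE t)
  have hD₁ζ₁ : gFun' a b c ζ₁ + (a + b) * gFun a b c ζ₁ < 0 := by
    have hsl : (E ν₁ - E 0) / (ν₁ - 0) < 0 := by
      apply div_neg_of_neg_of_pos
      · rw [hE0]; linarith
      · linarith
    rw [← hζ₁] at hsl
    by_contra hcon2
    push_neg at hcon2
    have := mul_nonneg (Real.exp_pos ((a + b) * ζ₁)).le hcon2
    linarith
  have hD₁ζ₂ : 0 < gFun' a b c ζ₂ + (a + b) * gFun a b c ζ₂ := by
    have hsl : 0 < (E ν₂ - E ν₁) / (ν₂ - ν₁) := by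
      apply div_pos
      · linarith
      · linarith
    rw [← hζ₂] at hsl
    by_contra hcon2
    push_neg at hcon2
    have := mul_nonpos_of_nonneg_of_nonpos (Real.exp_pos ((a + b) * ζ₂)).le hcon2
    linarith
  -- Now A t = exp(2c t) * (gFun' t + (a+b) gFun t) has strictly negative derivative.
  set A := fun t : ℝ => Real.exp (2 * c * t) * (gFun' a b c t + (a + b) * gFun a b c t)
    with hAdef
  have hA : ∀ t : ℝ, HasDerivAt A
      (Real.exp (2 * c * t) * ((gFun'' a b c t + (a + b) * gFun' a b c t)
        + 2 * c * (gFun' a b c t + (a + b) * gFun a b c t))) t := by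
    intro t
    have h0 : HasDerivAt (fun s : ℝ => 2 * c * s) (2 * c) t := by
      simpa using (hasDerivAt_id t).const_mul (2 * c)
    have h1 := h0.exp
    have h2 := (hasDerivAt_gFun' a b c t).add ((hasDerivAt_gFun a b c t).const_mul (a + b))
    have h3 := h1.mul h2
    exact h3.congr_deriv (by simp only [Pi.add_apply]; ring)
  have hAneg : ∀ t : ℝ, (Real.exp (2 * c * t) * ((gFun'' a b c t + (a + b) * gFun' a b c t)
        + 2 * c * (gFun' a b c t + (a + b) * gFun a b c t))) < 0 := by
    intro t
    have hId : (gFun'' a b c t + (a + b) * gFun' a b c t)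
        + 2 * c * (gFun' a b c t + (a + b) * gFun a b c t) =
        -(b * (2 * c - a) * Real.exp (-t * a))
          - 2 * (a - b) * (c - a) * (Real.exp (-t * a)) ^ 2
          - 2 * c * (c - a - b) * Real.exp (-t * c) := by
      unfold gFun gFun' gFun''
      ring
    rw [hId]
    have hx0 : 0 < Real.exp (-t * a) := Real.exp_pos _
    have hz0 : 0 < Real.exp (-t * c) := Real.exp_pos _
    have hterm1 : 0 < b * (2 * c - a) * Real.exp (-t * a) := by
      apply mul_pos (mul_pos hb (by linarith)) hx0
    have hterm2 : 0 ≤ 2 * (a - b) * (c - a) * (Real.exp (-t * a)) ^ 2 := by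
      apply mul_nonneg
      · apply mul_nonneg (by linarith) (by linarith)
      · positivity
    have hterm3 : 0 ≤ 2 * c * (c - a - b) * Real.exp (-t * c) := by
      apply mul_nonneg
      · apply mul_nonneg (by linarith) (by linarith)
      · exact hz0.le
    have hE0 : 0 < Real.exp (2 * c * t) := Real.exp_pos _
    nlinarith
  have hζζ : ζ₁ < ζ₂ := lt_trans hζ₁mem.2 hζ₂mem.1
  have hAcont : Continuous A := by
    apply Continuous.mul
    · exact Real.continuous_exp.comp (continuous_const.mul continuous_id)
    · exact (gFun'_cont a b c).add (continuous_const.mul (gFun_cont a b c))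
  obtain ⟨ξ, hξmem, hξ⟩ := exists_hasDerivAt_eq_slope A _ hζζ
    (hAcont.continuousOn) (fun t _ => hA t)
  have hAξ := hAneg ξ
  rw [hξ] at hAξ
  have hAζ₁ : A ζ₁ < 0 := mul_neg_of_pos_of_neg (Real.exp_pos _) hD₁ζ₁
  have hAζ₂ : 0 < A ζ₂ := mul_pos (Real.exp_pos _) hD₁ζ₂
  have hnum : 0 < A ζ₂ - A ζ₁ := by linarith
  have hden : 0 < ζ₂ - ζ₁ := sub_pos.mpr hζζ
  have := div_pos hnum hden
  linarith

/-- Combined single-crossing lemma. -/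
private lemma crossing (a b c : ℝ) (hb : 0 < b) (hba : b ≤ a) (hac : a < c)
    {ν₁ ν₂ : ℝ} (hν₁ : 0 < ν₁) (h12 : ν₁ ≤ ν₂)
    (hneg : gFun a b c ν₁ < 0) : gFun a b c ν₂ ≤ 0 := by
  rcases le_or_gt c (a + b) with h | h
  · exact crossing1 a b c hb hba hac h hν₁ h12 hneg
  · exact crossing2 a b c hb hba hac h.le hν₁ h12 hneg

/-- From the weighted-sum equality, conclude the unweighted sum inequality. -/
private lemma sum_step {K : ℕ} (pi w : Fin K → ℝ) (lam0 : ℝ) (hlam0 : 0 < lam0)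
    (hpi_pos : ∀ c, 0 < pi c) (hpi_sorted : ∀ i j : Fin K, i ≤ j → pi j ≤ pi i)
    (hw_pos : ∀ c, 0 < w c) (dval : ℝ → ℝ)
    (hcross : ∀ ν₁ ν₂ : ℝ, 0 < ν₁ → ν₁ ≤ ν₂ → dval ν₁ < 0 → dval ν₂ ≤ 0)
    (hsum : ∑ c, w c * pi c * dval (lam0 * pi c) = 0) :
    0 ≤ ∑ c, w c * dval (lam0 * pi c) := by
  set Neg := Finset.univ.filter (fun c : Fin K => dval (lam0 * pi c) < 0) with hNegdef
  rcases Neg.eq_empty_or_nonempty with hne | hne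
  · apply Finset.sum_nonneg
    intro c _
    have hnotin : c ∉ Neg := by rw [hne]; exact Finset.notMem_empty c
    have : ¬ dval (lam0 * pi c) < 0 := by
      intro h
      exact hnotin (Finset.mem_filter.mpr ⟨Finset.mem_univ c, h⟩)
    exact mul_nonneg (hw_pos c).le (not_lt.mp this)
  · set j₀ := Neg.max' hne with hj₀def
    have hj₀Neg : j₀ ∈ Neg := Neg.max'_mem hne
    have hj₀ : dval (lam0 * pi j₀) < 0 := (Finset.mem_filter.mp hj₀Neg).2
    have hπj₀ : 0 < pi j₀ := hpi_pos j₀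
    have hTpos : 0 < (pi j₀)⁻¹ := inv_pos.mpr hπj₀
    have hTj₀ : (pi j₀)⁻¹ * pi j₀ = 1 := inv_mul_cancel₀ (ne_of_gt hπj₀)
    have key : ∀ c : Fin K,
        (pi j₀)⁻¹ * (w c * pi c * dval (lam0 * pi c)) ≤ w c * dval (lam0 * pi c) := by
      intro c
      rcases lt_trichotomy (dval (lam0 * pi c)) 0 with hc | hc | hc
      · have hcNeg : c ∈ Neg := Finset.mem_filter.mpr ⟨Finset.mem_univ c, hc⟩
        have hcj : c ≤ j₀ := Finset.le_max' _ _ hcNeg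
        have hp : pi j₀ ≤ pi c := hpi_sorted c j₀ hcj
        have h1 : (1 : ℝ) ≤ (pi j₀)⁻¹ * pi c := by
          rw [← hTj₀]
          exact mul_le_mul_of_nonneg_left hp hTpos.le
        have hwd : w c * dval (lam0 * pi c) < 0 := mul_neg_of_pos_of_neg (hw_pos c) hc
        nlinarith [mul_le_mul_of_nonpos_right h1 hwd.le]
      · rw [hc]; simp
      · have hππ : pi c ≤ pi j₀ := by
          by_contra hcon
          push_neg at hcon
          have hν₁ : 0 < lam0 * pi j₀ := mul_pos hlam0 hπj₀
          have hle : lam0 * pi j₀ ≤ lam0 * pi c :=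
            mul_le_mul_of_nonneg_left hcon.le hlam0.le
          exact absurd (hcross _ _ hν₁ hle hj₀) (not_le.mpr hc)
        have h1 : (pi j₀)⁻¹ * pi c ≤ 1 := by
          rw [← hTj₀]
          exact mul_le_mul_of_nonneg_left hππ hTpos.le
        have hwd : 0 < w c * dval (lam0 * pi c) := mul_pos (hw_pos c) hc
        nlinarith [mul_le_mul_of_nonneg_right h1 hwd.le]
    calc (0 : ℝ) = (pi j₀)⁻¹ * ∑ c, w c * pi c * dval (lam0 * pi c) := by
          rw [hsum, mul_zero]
      _ = ∑ c, (pi j₀)⁻¹ * (w c * pi c * dval (lam0 * pi c)) := Finset.mul_sum _ _ _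
      _ ≤ ∑ c, w c * dval (lam0 * pi c) := Finset.sum_le_sum (fun c _ => key c)

/-- Lemma 1, byte hit rate version: if the full-filtering cache `(θ, 0)`
achieves the same byte hit rate as the cache `(θ̂, θ̂ˢ)` with `θ̂ˢ > 0`, then its
normalized size is no larger, and strictly smaller when rare objects are present (`α > 0`). -/
theorem full_filtering_minimizes_size_bhr (K : ℕ) (hK : 1 ≤ K)
    (lam0 L : ℝ) (hlam0 : 0 < lam0) (hL : 0 < L)
    (pi w : Fin K → ℝ) (wbar alpha : ℝ)
    (hpi_pos : ∀ c, 0 < pi c) (hpi_sorted : ∀ i j : Fin K, i ≤ j → pi j ≤ pi i)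
    (hw_pos : ∀ c, 0 < w c) (hw_sorted : ∀ i j : Fin K, i ≤ j → w j ≤ w i)
    (hwbar : 0 < wbar) (halpha : 0 ≤ alpha) (hprob : alpha + ∑ c, pi c = 1)
    (θhat θhats θ : ℝ)
    (h1 : 0 < θhats) (h2 : θhats ≤ θhat) (h3 : θhat ≤ L) (h4 : 0 < θ) (h5 : θ ≤ L)
    (heq : byteHitRate K lam0 alpha wbar pi w θhat θhats
      = byteHitRate K lam0 alpha wbar pi w θ 0) :
    normSize K lam0 alpha wbar pi w θ 0 ≤ normSize K lam0 alpha wbar pi w θhat θhats ∧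
    (0 < alpha →
      normSize K lam0 alpha wbar pi w θ 0 < normSize K lam0 alpha wbar pi w θhat θhats) := by
  have hθhat : 0 < θhat := lt_of_lt_of_le h1 h2
  have hsumpos : 0 < ∑ c, w c * pi c :=
    Finset.sum_pos (fun c _ => mul_pos (hw_pos c) (hpi_pos c)) ⟨⟨0, hK⟩, Finset.mem_univ _⟩
  have hDden : 0 < wbar * alpha + ∑ c, w c * pi c := by
    have := mul_nonneg hwbar.le halpha
    linarith
  -- Equality of weighted sums from the byte-hit-rate equality
  have hNum : ∑ c, w c * pi c * hitProb (lam0 * pi c) θhat θhats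
      = ∑ c, w c * pi c * hitProb (lam0 * pi c) θ 0 := by
    unfold byteHitRate at heq
    have h := (div_eq_div_iff (ne_of_gt hDden) (ne_of_gt hDden)).mp heq
    exact mul_right_cancel₀ (ne_of_gt hDden) h
  -- relation between gFun and hitProb differences
  have hgf : ∀ ν : ℝ, gFun θhat θhats θ ν = hitProb ν θhat θhats - hitProb ν θ 0 := by
    intro ν
    unfold gFun hitProb
    simp [mul_zero, Real.exp_zero]
  -- key sum inequality
  have hKey : ∑ c, w c * hitProb (lam0 * pi c) θ 0
      ≤ ∑ c, w c * hitProb (lam0 * pi c) θhat θhats := by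
    rcases le_or_gt θ θhat with hcase | hcase
    · apply Finset.sum_le_sum
      intro c _
      apply mul_le_mul_of_nonneg_left _ (hw_pos c).le
      have hμ : 0 < lam0 * pi c := mul_pos hlam0 (hpi_pos c)
      unfold hitProb
      have e0 : -(lam0 * pi c) * 0 = 0 := by ring
      rw [e0, Real.exp_zero]
      set μ := lam0 * pi c
      set x := Real.exp (-μ * θhat) with hxdef
      set z := Real.exp (-μ * θ) with hzdef
      set y := Real.exp (-μ * θhats) with hydef
      have hxz : x ≤ z := by
        rw [hxdef, hzdef]
        apply Real.exp_le_exp.mpr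
        nlinarith
      have hz1 : z ≤ 1 := by
        rw [hzdef]
        apply Real.exp_le_one_iff.mpr
        nlinarith
      have hy1 : y ≤ 1 := by
        rw [hydef]
        apply Real.exp_le_one_iff.mpr
        nlinarith
      have hx0 : 0 < x := Real.exp_pos _
      nlinarith [mul_nonneg (sub_nonneg.mpr hxz) (by nlinarith : (0:ℝ) ≤ 2 - x - z),
        mul_nonneg hx0.le (sub_nonneg.mpr hy1)]
    · -- main case : θhat < θ, use the single-crossing machinery
      have hcross : ∀ ν₁ ν₂ : ℝ, 0 < ν₁ → ν₁ ≤ ν₂ →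
          (hitProb ν₁ θhat θhats - hitProb ν₁ θ 0) < 0 →
          (hitProb ν₂ θhat θhats - hitProb ν₂ θ 0) ≤ 0 := by
        intro ν₁ ν₂ hh₁ hh₂ hh₃
        rw [← hgf] at hh₃ ⊢
        exact crossing θhat θhats θ h1 h2 hcase hh₁ hh₂ hh₃
      have hsum0 : ∑ c, w c * pi c *
          (hitProb (lam0 * pi c) θhat θhats - hitProb (lam0 * pi c) θ 0) = 0 := by
        simp only [mul_sub]
        rw [Finset.sum_sub_distrib, hNum, sub_self]
      have h0 := sum_step pi w lam0 hlam0 hpi_pos hpi_sorted hw_pos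
        (fun ν => hitProb ν θhat θhats - hitProb ν θ 0) hcross hsum0
      simp only [mul_sub] at h0
      rw [Finset.sum_sub_distrib] at h0
      linarith
  -- assemble the conclusion
  have hden : 0 < lam0 * (wbar * alpha + ∑ c, w c * pi c) := mul_pos hlam0 hDden
  have hextra : 0 ≤ wbar * alpha * lam0 * θhats := by positivity
  constructor
  · unfold normSize
    rw [div_le_div_iff₀ hden hden]
    have hN : ∑ c, w c * hitProb (lam0 * pi c) θ 0 + wbar * alpha * lam0 * 0
        ≤ ∑ c, w c * hitProb (lam0 * pi c) θhat θhats + wbar * alpha * lam0 * θhats := by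
      rw [mul_zero, add_zero]
      linarith
    nlinarith [mul_le_mul_of_nonneg_right hN hden.le]
  · intro hα
    have hextra' : 0 < wbar * alpha * lam0 * θhats := by positivity
    unfold normSize
    rw [div_lt_div_iff₀ hden hden]
    have hN : ∑ c, w c * hitProb (lam0 * pi c) θ 0 + wbar * alpha * lam0 * 0
        < ∑ c, w c * hitProb (lam0 * pi c) θhat θhats + wbar * alpha * lam0 * θhats := by
      rw [mul_zero, add_zero]
      linarith
    nlinarith [mul_lt_mul_of_pos_right hN hden]
end

section
/- (Concrete form of Lemma 6.) Let β > 1, K ≥ 1, Z = ∑_{k=1}^{K} k^{−β}, λ > 0, q ∈ (0, 1], α ≥ 0, and set λ_c = λ·q·Z^{−1}·c^{−β} for c = 1, …, K. Define the d-TTL hit rate of the type with fixed TTL θ as h(θ) = (q/(α + q)) · ∑_{c=1}^{K} Z^{−1}·c^{−β}·(1 − e^{−λ_c θ}). Let r ∈ (0, 1) and δ ∈ (0, r), and set M = ⌈(δ·Z·(β − 1))^{−1/(β−1)}⌉. If M ≤ K, then with L = ln(1/(r − δ)) / λ_M one has h(L) ≥ (q/(α + q))·(1 − r). -/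
open Finset

/-- The normalizing constant of the Zipfian distribution with parameter `β` over `K` objects. -/
noncomputable def zipfZ (K : ℕ) (β : ℝ) : ℝ := ∑ k ∈ Finset.Icc 1 K, (k : ℝ) ^ (-β)

/-- The Poisson request rate of the `c`-th most popular recurring object:
`λ_c = λ q Z⁻¹ c^{-β}`. -/
noncomputable def zipfRate (K : ℕ) (β lam0 q : ℝ) (c : ℕ) : ℝ :=
  lam0 * q * (zipfZ K β)⁻¹ * (c : ℝ) ^ (-β)

/-- The stationary hit rate of the type for the d-TTL cache with fixed TTL `θ`. -/
noncomputable def dTTLhitRate (K : ℕ) (β lam0 q alpha : ℝ) (θ : ℝ) : ℝ :=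
  (q / (alpha + q)) * ∑ c ∈ Finset.Icc 1 K,
    (zipfZ K β)⁻¹ * (c : ℝ) ^ (-β) * (1 - Real.exp (-(zipfRate K β lam0 q c) * θ))

private theorem tail_bound' (β : ℝ) (hβ : 1 < β) (M K : ℕ) (hM1 : 1 ≤ M) (hMK : M ≤ K) :
    ∑ c ∈ Finset.Icc (M+1) K, (c : ℝ) ^ (-β) ≤ (M : ℝ) ^ (1 - β) / (β - 1) := by
  have hβ1 : 0 < β - 1 := by linarith
  have hMpos : (0:ℝ) < M := by exact_mod_cast hM1
  have hKpos : (0:ℝ) < K := lt_of_lt_of_le hMpos (by exact_mod_cast hMK)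
  have hanti : AntitoneOn (fun x : ℝ => x ^ (-β)) (Set.Icc (M:ℝ) ((M:ℝ) + (K - M : ℕ))) := by
    intro x hx y hy hxy
    exact Real.rpow_le_rpow_of_nonpos (lt_of_lt_of_le hMpos hx.1) hxy (by linarith)
  have hsum := hanti.sum_le_integral
  have hre : ∑ c ∈ Finset.Icc (M+1) K, (c : ℝ) ^ (-β)
      = ∑ i ∈ Finset.range (K - M), ((M:ℝ) + ((i + 1 : ℕ) : ℝ)) ^ (-β) := by
    rw [← Finset.Ico_add_one_right_eq_Icc, Finset.sum_Ico_eq_sum_range]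
    rw [show K + 1 - (M + 1) = K - M by omega]
    apply Finset.sum_congr rfl
    intro i _
    congr 1
    push_cast
    ring
  have hcast : (M:ℝ) + ((K - M : ℕ) : ℝ) = (K : ℝ) := by
    rw [Nat.cast_sub hMK]; ring
  have hint : ∫ x in (M:ℝ)..((M:ℝ) + ((K - M : ℕ):ℝ)), x ^ (-β)
      = ((K:ℝ) ^ (-β + 1) - (M:ℝ) ^ (-β + 1)) / (-β + 1) := by
    rw [hcast, integral_rpow]
    right
    exact ⟨fun h => by have := neg_injective h; linarith,
      Set.notMem_uIcc_of_lt hMpos hKpos⟩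
  rw [hre]
  refine le_trans hsum ?_
  rw [hint, show (1:ℝ) - β = -β + 1 by ring]
  have ha : 0 ≤ (K:ℝ) ^ (-β + 1) := Real.rpow_nonneg hKpos.le _
  have heq : ((K:ℝ)^(-β+1) - (M:ℝ)^(-β+1))/(-β+1) = ((M:ℝ)^(-β+1) - (K:ℝ)^(-β+1))/(β-1) := by
    rw [div_eq_div_iff (by linarith) (by linarith)]; ring
  rw [heq]
  gcongr (?_ : ℝ) / _
  linarith

/-- concrete form of Lemma 6: under Poisson arrivals with Zipfian popularity,
with `M = ⌈(δ Z (β-1))^{-1/(β-1)}⌉ ≤ K`, the TTL `L = ln(1/(r-δ))/λ_M` achieves hit rate at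
least `(q/(α+q))(1-r)`. -/
theorem zipf_ttl_tuning (β : ℝ) (hβ : 1 < β) (K : ℕ) (hK : 1 ≤ K)
    (lam0 q alpha r δ : ℝ) (hlam0 : 0 < lam0) (hq0 : 0 < q) (hq1 : q ≤ 1)
    (halpha : 0 ≤ alpha) (hr : r ∈ Set.Ioo (0 : ℝ) 1) (hδ : δ ∈ Set.Ioo (0 : ℝ) r)
    (M : ℕ) (hM : M = ⌈(δ * zipfZ K β * (β - 1)) ^ (-(1 : ℝ) / (β - 1))⌉₊)
    (hMK : M ≤ K)
    (L : ℝ) (hLdef : L = Real.log (1 / (r - δ)) / zipfRate K β lam0 q M) :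
    (q / (alpha + q)) * (1 - r) ≤ dTTLhitRate K β lam0 q alpha L := by
  obtain ⟨hr0, hr1⟩ := hr
  obtain ⟨hδ0, hδr⟩ := hδ
  have hβ1 : 0 < β - 1 := by linarith
  have hrδ0 : 0 < r - δ := by linarith
  have hrδ1 : r - δ < 1 := by linarith
  -- positivity of Z
  have hZpos : 0 < zipfZ K β := by
    unfold zipfZ
    apply Finset.sum_pos
    · intro k hk
      have hk1 : 1 ≤ k := (Finset.mem_Icc.1 hk).1
      have : (0:ℝ) < k := by exact_mod_cast hk1
      exact Real.rpow_pos_of_pos this _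
    · exact ⟨1, Finset.mem_Icc.2 ⟨le_refl 1, hK⟩⟩
  set Z := zipfZ K β with hZ
  -- M ≥ 1
  have hxpos : (0:ℝ) < (δ * Z * (β - 1)) ^ (-(1 : ℝ) / (β - 1)) :=
    Real.rpow_pos_of_pos (by positivity) _
  have hM1 : 1 ≤ M := by
    rw [hM]; exact Nat.ceil_pos.2 hxpos
  have hMpos : (0:ℝ) < M := by exact_mod_cast hM1
  -- rate positivity
  have hlamM : 0 < zipfRate K β lam0 q M :=
    mul_pos (mul_pos (mul_pos hlam0 hq0) (inv_pos.2 hZpos)) (Real.rpow_pos_of_pos hMpos _)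
  -- L ≥ 0
  have hL0 : 0 ≤ L := by
    rw [hLdef]
    apply div_nonneg _ hlamM.le
    apply Real.log_nonneg
    rw [le_div_iff₀ hrδ0]; linarith
  -- exp(-λ_M L) = r - δ
  have hexpM : Real.exp (-(zipfRate K β lam0 q M) * L) = r - δ := by
    have harg : -(zipfRate K β lam0 q M) * L = Real.log (r - δ) := by
      rw [hLdef, one_div, Real.log_inv]
      field_simp
    rw [harg, Real.exp_log hrδ0]
  -- for c ≤ M, exp(-λ_c L) ≤ r - δ
  have hexp_le : ∀ c : ℕ, 0 < c → c ≤ M →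
      Real.exp (-(zipfRate K β lam0 q c) * L) ≤ r - δ := by
    intro c hc0 hcM
    have hcpos : (0:ℝ) < c := by exact_mod_cast hc0
    have hrate_le : zipfRate K β lam0 q M ≤ zipfRate K β lam0 q c := by
      unfold zipfRate
      apply mul_le_mul_of_nonneg_left _ (by positivity)
      exact Real.rpow_le_rpow_of_nonpos hcpos (by exact_mod_cast hcM) (by linarith)
    rw [← hexpM]
    apply Real.exp_le_exp.2
    have := mul_le_mul_of_nonneg_right hrate_le hL0
    linarith
  -- tail bound : T ≤ δ Z
  have hT : ∑ c ∈ Finset.Icc (M+1) K, (c : ℝ) ^ (-β) ≤ δ * Z := by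
    refine le_trans (tail_bound' β hβ M K hM1 hMK) ?_
    have hxM : (δ * Z * (β - 1)) ^ (-(1 : ℝ) / (β - 1)) ≤ (M:ℝ) := by
      rw [hM]; exact Nat.le_ceil _
    have h1 : (M:ℝ) ^ (1 - β) ≤ ((δ * Z * (β - 1)) ^ (-(1 : ℝ) / (β - 1))) ^ (1 - β) :=
      Real.rpow_le_rpow_of_nonpos hxpos hxM (by linarith)
    have h2 : ((δ * Z * (β - 1)) ^ (-(1 : ℝ) / (β - 1))) ^ (1 - β) = δ * Z * (β - 1) := by
      rw [← Real.rpow_mul (by positivity),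
        show (-(1:ℝ)/(β-1)) * (1-β) = 1 by field_simp; ring, Real.rpow_one]
    rw [div_le_iff₀ hβ1]
    calc (M:ℝ) ^ (1 - β) ≤ δ * Z * (β - 1) := h2 ▸ h1
      _ = δ * Z * (β - 1) := rfl
  -- the sums, split at M
  have hIccIoc : ∀ n : ℕ, Finset.Icc 1 n = Finset.Ioc 0 n := fun n => Finset.Icc_add_one_left_eq_Ioc 0 n
  have hsplitZ : Z = (∑ c ∈ Finset.Ioc 0 M, (c:ℝ)^(-β)) + ∑ c ∈ Finset.Ioc M K, (c:ℝ)^(-β) := by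
    rw [hZ]; unfold zipfZ
    rw [hIccIoc, ← Finset.sum_Ioc_consecutive _ (Nat.zero_le M) hMK]
  have hTail' : ∑ c ∈ Finset.Ioc M K, (c:ℝ)^(-β) ≤ δ * Z := by
    rw [← Finset.Icc_add_one_left_eq_Ioc]; exact hT
  have hSM : Z * (1 - δ) ≤ ∑ c ∈ Finset.Ioc 0 M, (c:ℝ)^(-β) := by
    have := hsplitZ
    nlinarith [hTail', hZpos]
  -- lower bound the hit-rate sum
  set f : ℕ → ℝ := fun c => Z⁻¹ * (c:ℝ)^(-β) * (1 - Real.exp (-(zipfRate K β lam0 q c) * L))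
    with hf
  have hfnonneg : ∀ c : ℕ, 0 ≤ f c := by
    intro c
    apply mul_nonneg (by positivity)
    have : -(zipfRate K β lam0 q c) * L ≤ 0 := by
      apply mul_nonpos_of_nonpos_of_nonneg _ hL0
      simp only [neg_nonpos]
      unfold zipfRate
      positivity
    have := Real.exp_le_one_iff.2 this
    linarith
  have hhead : ∀ c ∈ Finset.Ioc 0 M, Z⁻¹ * (1 - (r - δ)) * (c:ℝ)^(-β) ≤ f c := by
    intro c hc
    obtain ⟨hc0, hcM⟩ := Finset.mem_Ioc.1 hc
    have h1 : 1 - (r - δ) ≤ 1 - Real.exp (-(zipfRate K β lam0 q c) * L) := by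
      have := hexp_le c hc0 hcM; linarith
    have hcpos : (0:ℝ) < c := by exact_mod_cast hc0
    calc Z⁻¹ * (1 - (r - δ)) * (c:ℝ)^(-β)
        = Z⁻¹ * (c:ℝ)^(-β) * (1 - (r - δ)) := by ring
      _ ≤ f c := by
          apply mul_le_mul_of_nonneg_left h1 (by positivity)
  have hsum_lb : 1 - r ≤ ∑ c ∈ Finset.Icc 1 K, f c := by
    rw [hIccIoc, ← Finset.sum_Ioc_consecutive _ (Nat.zero_le M) hMK]
    have h2 : (0:ℝ) ≤ ∑ c ∈ Finset.Ioc M K, f c :=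
      Finset.sum_nonneg fun c _ => hfnonneg c
    have h3 : ∑ c ∈ Finset.Ioc 0 M, Z⁻¹ * (1 - (r - δ)) * (c:ℝ)^(-β)
        ≤ ∑ c ∈ Finset.Ioc 0 M, f c := Finset.sum_le_sum hhead
    rw [← Finset.mul_sum] at h3
    have h4 : Z⁻¹ * (1 - (r - δ)) * (Z * (1 - δ))
        ≤ Z⁻¹ * (1 - (r - δ)) * ∑ c ∈ Finset.Ioc 0 M, (c:ℝ)^(-β) := by
      apply mul_le_mul_of_nonneg_left hSM
      have : 0 ≤ 1 - (r - δ) := by linarith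
      positivity
    have h5 : Z⁻¹ * (1 - (r - δ)) * (Z * (1 - δ)) = (1 - (r - δ)) * (1 - δ) := by
      field_simp
    have h6 : 1 - r ≤ (1 - (r - δ)) * (1 - δ) := by nlinarith
    linarith
  -- conclude
  unfold dTTLhitRate
  rw [← hZ]
  have hc : 0 ≤ q / (alpha + q) := by positivity
  exact mul_le_mul_of_nonneg_left hsum_lb hc
end

section
/- Let (X_j)_{j ≥ 0} be an i.i.d. sequence of nonnegative real-valued random variables on a probability space, with common CDF F(t) = ℙ(X₀ ≤ t). Let 0 ≤ θ^s ≤ θ. Then, almost surely, (1/n)·∑_{j=1}^{n} [ 𝟙(X_{j−1} ≤ θ)·𝟙(X_j ≤ θ) + 𝟙(X_{j−1} > θ)·𝟙(X_j ≤ θ^s) ] → F(θ)² + (1 − F(θ))·F(θ^s) as n → ∞. -/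
open MeasureTheory ProbabilityTheory Filter Finset

open scoped Topology

lemma aux_sum_Icc_split (g : ℕ → ℝ) (n : ℕ) :
    ∑ j ∈ Finset.Icc 1 n, g j =
      (∑ k ∈ Finset.range ((n+1)/2), g (2*k+1)) + ∑ k ∈ Finset.range (n/2), g (2*k+2) := by
  induction n with
  | zero => simp
  | succ n ih =>
    rw [Finset.sum_Icc_succ_top (by omega), ih]
    rcases Nat.even_or_odd n with ⟨m, hm⟩ | ⟨m, hm⟩
    · have e1 : (n+1)/2 = m := by omega
      have e2 : (n+1+1)/2 = m+1 := by omega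
      have e3 : n/2 = m := by omega
      have e4 : 2*m+1 = n+1 := by omega
      rw [e1, e2, e3, Finset.sum_range_succ, e4]; ring
    · have e1 : (n+1)/2 = m+1 := by omega
      have e2 : (n+1+1)/2 = m+1 := by omega
      have e3 : n/2 = m := by omega
      have e4 : 2*m+2 = n+1 := by omega
      rw [e1, e2, e3, Finset.sum_range_succ, Finset.sum_range_succ, e4]; ring

lemma aux_tendsto_ratio_half (c : ℕ → ℕ) (h1 : ∀ n : ℕ, (n : ℝ) - 1 ≤ 2 * c n)
    (h2 : ∀ n : ℕ, (2 * c n : ℝ) ≤ n + 1) :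
    Tendsto (fun n : ℕ => (c n : ℝ) / n) atTop (𝓝 (1/2)) := by
  have hinv : Tendsto (fun n : ℕ => 1 / (n : ℝ)) atTop (𝓝 0) :=
    tendsto_one_div_atTop_nhds_zero_nat
  have hlo : Tendsto (fun n : ℕ => (1 - 1 / (n : ℝ)) / 2) atTop (𝓝 (1/2)) := by
    have := ((tendsto_const_nhds (α := ℕ) (x := (1:ℝ))).sub hinv).div_const 2
    simpa using this
  have hhi : Tendsto (fun n : ℕ => (1 + 1 / (n : ℝ)) / 2) atTop (𝓝 (1/2)) := by
    have := ((tendsto_const_nhds (α := ℕ) (x := (1:ℝ))).add hinv).div_const 2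
    simpa using this
  refine tendsto_of_tendsto_of_tendsto_of_le_of_le' hlo hhi ?_ ?_
  · filter_upwards [eventually_ge_atTop 1] with n hn
    have hn0 : (0:ℝ) < n := by exact_mod_cast hn
    have h := h1 n
    rw [div_le_div_iff₀ two_pos hn0]
    have hne : (n:ℝ) ≠ 0 := ne_of_gt hn0
    field_simp
    nlinarith [h, hn0]
  · filter_upwards [eventually_ge_atTop 1] with n hn
    have hn0 : (0:ℝ) < n := by exact_mod_cast hn
    have h := h2 n
    rw [div_le_div_iff₀ hn0 two_pos]
    have hne : (n:ℝ) ≠ 0 := ne_of_gt hn0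
    field_simp
    nlinarith [h, hn0]

/-- for an i.i.d. sequence of nonnegative inter-request times `X_j` with CDF
`F`, and TTLs `0 ≤ θˢ ≤ θ`, the empirical hit rate of the two-level TTL cache converges
almost surely to `F(θ)² + (1 - F(θ)) F(θˢ)`. -/
theorem two_level_ttl_hit_rate_lln {Ω : Type*} [MeasurableSpace Ω]
    (μ : Measure Ω) [IsProbabilityMeasure μ]
    (X : ℕ → Ω → ℝ) (hmeas : ∀ j, Measurable (X j))
    (hindep : iIndepFun X μ)
    (hident : ∀ j, IdentDistrib (X j) (X 0) μ μ)
    (hnonneg : ∀ j ω, 0 ≤ X j ω)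
    (θ θs : ℝ) (h0 : 0 ≤ θs) (h1 : θs ≤ θ)
    (F : ℝ → ℝ) (hF : ∀ t, F t = (μ {ω | X 0 ω ≤ t}).toReal) :
    ∀ᵐ ω ∂μ, Tendsto (fun n : ℕ => (1 / (n : ℝ)) * ∑ j ∈ Finset.Icc 1 n,
        ((if X (j - 1) ω ≤ θ then (1 : ℝ) else 0) * (if X j ω ≤ θ then (1 : ℝ) else 0) +
         (if θ < X (j - 1) ω then (1 : ℝ) else 0) * (if X j ω ≤ θs then (1 : ℝ) else 0)))
      atTop (nhds (F θ ^ 2 + (1 - F θ) * F θs)) := by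
  classical
  set f : ℝ × ℝ → ℝ := fun p =>
    (if p.1 ≤ θ then (1:ℝ) else 0) * (if p.2 ≤ θ then (1:ℝ) else 0) +
    (if θ < p.1 then (1:ℝ) else 0) * (if p.2 ≤ θs then (1:ℝ) else 0) with hfdef
  have hfm : Measurable f := by
    apply Measurable.add <;> apply Measurable.mul <;>
      refine Measurable.ite ?_ measurable_const measurable_const
    · exact measurableSet_le measurable_fst measurable_const
    · exact measurableSet_le measurable_snd measurable_const
    · exact measurableSet_lt measurable_const measurable_fst
    · exact measurableSet_le measurable_snd measurable_const
  have hfb : ∀ p, ‖f p‖ ≤ 1 := by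
    intro p
    simp only [hfdef, Real.norm_eq_abs]
    split_ifs <;> norm_num <;> linarith
  -- the per-request hit indicator
  set Y : ℕ → Ω → ℝ := fun k ω => f (X k ω, X (k+1) ω) with hYdef
  have hYm : ∀ k, Measurable (Y k) := fun k =>
    hfm.comp ((hmeas k).prodMk (hmeas (k+1)))
  have hYint : ∀ k, Integrable (Y k) μ :=
    fun k => (integrable_const (1:ℝ)).mono' (hYm k).aestronglyMeasurable
      (ae_of_all _ fun ω => hfb _)
  have pairIdent : ∀ a b : ℕ, a ≠ b →
      IdentDistrib (fun ω => (X a ω, X b ω)) (fun ω => (X 0 ω, X 1 ω)) μ μ := by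
    intro a b hab
    have hi1 : IndepFun (X a) (X b) μ := hindep.indepFun hab
    have hi2 : IndepFun (X 0) (X 1) μ := hindep.indepFun one_ne_zero.symm
    refine ⟨((hmeas a).prodMk (hmeas b)).aemeasurable,
      ((hmeas 0).prodMk (hmeas 1)).aemeasurable, ?_⟩
    rw [(indepFun_iff_map_prod_eq_prod_map_map (hmeas a).aemeasurable
        (hmeas b).aemeasurable).1 hi1,
      (indepFun_iff_map_prod_eq_prod_map_map (hmeas 0).aemeasurable
        (hmeas 1).aemeasurable).1 hi2,
      (hident a).map_eq, (hident b).map_eq, (hident 1).map_eq]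
  have hYident : ∀ k, IdentDistrib (Y k) (Y 0) μ μ :=
    fun k => (pairIdent k (k+1) (by omega)).comp hfm
  have hYindep : ∀ a b : ℕ, a + 1 < b → IndepFun (Y a) (Y b) μ := by
    intro a b hab
    exact (hindep.indepFun_prodMk_prodMk hmeas a (a+1) b (b+1)
      (by omega) (by omega) (by omega) (by omega)).comp hfm hfm
  set A : ℕ → Ω → ℝ := fun k => Y (2*k) with hAdef
  set B : ℕ → Ω → ℝ := fun k => Y (2*k+1) with hBdef
  have hApair : Pairwise (Function.onFun (IndepFun · · μ) A) := by
    intro i j hij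
    rcases lt_or_gt_of_ne hij with h | h
    · exact hYindep _ _ (by omega)
    · exact (hYindep _ _ (by omega)).symm
  have hBpair : Pairwise (Function.onFun (IndepFun · · μ) B) := by
    intro i j hij
    rcases lt_or_gt_of_ne hij with h | h
    · exact hYindep _ _ (by omega)
    · exact (hYindep _ _ (by omega)).symm
  have hAident : ∀ k, IdentDistrib (A k) (A 0) μ μ := fun k => hYident (2*k)
  have hBident : ∀ k, IdentDistrib (B k) (B 0) μ μ :=
    fun k => (hYident (2*k+1)).trans (hYident 1).symm
  have hA := strong_law_ae A (hYint 0) hApair hAident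
  have hB := strong_law_ae B (hYint 1) hBpair hBident
  have hEB : μ[B 0] = μ[Y 0] := (hYident 1).integral_eq
  -- indicator integral helpers
  have hg1m : Measurable (fun x : ℝ => if x ≤ θ then (1:ℝ) else 0) :=
    Measurable.ite (measurableSet_le measurable_id measurable_const)
      measurable_const measurable_const
  have hg2m : Measurable (fun x : ℝ => if θ < x then (1:ℝ) else 0) :=
    Measurable.ite (measurableSet_lt measurable_const measurable_id)
      measurable_const measurable_const
  have hg3m : Measurable (fun x : ℝ => if x ≤ θs then (1:ℝ) else 0) :=
    Measurable.ite (measurableSet_le measurable_id measurable_const)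
      measurable_const measurable_const
  have key : ∀ (j : ℕ) (t : ℝ),
      (∫ ω, (if X j ω ≤ t then (1:ℝ) else 0) ∂μ) = (μ {ω | X j ω ≤ t}).toReal := by
    intro j t
    have hset : MeasurableSet {ω | X j ω ≤ t} := (hmeas j) measurableSet_Iic
    have : (fun ω => if X j ω ≤ t then (1:ℝ) else 0) =
        Set.indicator {ω | X j ω ≤ t} (fun _ => (1:ℝ)) := by
      funext ω; simp [Set.indicator_apply, Set.mem_setOf_eq]
    rw [this, integral_indicator_const (1:ℝ) hset, smul_eq_mul, mul_one, measureReal_def]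
  have hmeasEq : ∀ (j : ℕ) (t : ℝ), μ {ω | X j ω ≤ t} = μ {ω | X 0 ω ≤ t} := by
    intro j t
    exact (hident j).measure_mem_eq (measurableSet_Iic (a := t))
  have key2 : (∫ ω, (if θ < X 0 ω then (1:ℝ) else 0) ∂μ) = 1 - F θ := by
    have hset : MeasurableSet {ω | X 0 ω ≤ θ} := (hmeas 0) measurableSet_Iic
    have hcompl : {ω | θ < X 0 ω} = {ω | X 0 ω ≤ θ}ᶜ := by
      ext ω; simp [not_le]
    have : (fun ω => if θ < X 0 ω then (1:ℝ) else 0) =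
        Set.indicator {ω | θ < X 0 ω} (fun _ => (1:ℝ)) := by
      funext ω; simp [Set.indicator_apply, Set.mem_setOf_eq]
    rw [this, hcompl, integral_indicator_const (1:ℝ) hset.compl, smul_eq_mul, mul_one, measureReal_def,
      prob_compl_eq_one_sub hset,
      ENNReal.toReal_sub_of_le prob_le_one ENNReal.one_ne_top, ENNReal.toReal_one, hF]
  -- compute the mean
  have hmean : μ[Y 0] = F θ ^ 2 + (1 - F θ) * F θs := by
    have hind01 : IndepFun (X 0) (X 1) μ := hindep.indepFun one_ne_zero.symm
    have hP1 : IndepFun (fun ω => if X 0 ω ≤ θ then (1:ℝ) else 0)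
        (fun ω => if X 1 ω ≤ θ then (1:ℝ) else 0) μ := hind01.comp hg1m hg1m
    have hP2 : IndepFun (fun ω => if θ < X 0 ω then (1:ℝ) else 0)
        (fun ω => if X 1 ω ≤ θs then (1:ℝ) else 0) μ := hind01.comp hg2m hg3m
    have hm1 : Measurable (fun ω => if X 0 ω ≤ θ then (1:ℝ) else 0) := hg1m.comp (hmeas 0)
    have hm2 : Measurable (fun ω => if X 1 ω ≤ θ then (1:ℝ) else 0) := hg1m.comp (hmeas 1)
    have hm3 : Measurable (fun ω => if θ < X 0 ω then (1:ℝ) else 0) := hg2m.comp (hmeas 0)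
    have hm4 : Measurable (fun ω => if X 1 ω ≤ θs then (1:ℝ) else 0) := hg3m.comp (hmeas 1)
    have hbnd : ∀ (g : Ω → ℝ), (∀ ω, ‖g ω‖ ≤ 1) → Measurable g → Integrable g μ :=
      fun g hb hm => (integrable_const (1:ℝ)).mono' hm.aestronglyMeasurable (ae_of_all _ hb)
    have hio : ∀ (x : ℝ) (t : ℝ), ‖if x ≤ t then (1:ℝ) else 0‖ ≤ 1 := by
      intro x t; split_ifs <;> norm_num
    have hio' : ∀ (x : ℝ), ‖if θ < x then (1:ℝ) else 0‖ ≤ 1 := by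
      intro x; split_ifs <;> norm_num
    have hi1 : Integrable (fun ω => (if X 0 ω ≤ θ then (1:ℝ) else 0) *
        (if X 1 ω ≤ θ then (1:ℝ) else 0)) μ := by
      refine hbnd _ (fun ω => ?_) (hm1.mul hm2)
      calc ‖_ * _‖ = ‖_‖ * ‖_‖ := norm_mul _ _
        _ ≤ 1 * 1 := mul_le_mul (hio _ _) (hio _ _) (norm_nonneg _) zero_le_one
        _ = 1 := mul_one 1
    have hi2 : Integrable (fun ω => (if θ < X 0 ω then (1:ℝ) else 0) *
        (if X 1 ω ≤ θs then (1:ℝ) else 0)) μ := by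
      refine hbnd _ (fun ω => ?_) (hm3.mul hm4)
      calc ‖_ * _‖ = ‖_‖ * ‖_‖ := norm_mul _ _
        _ ≤ 1 * 1 := mul_le_mul (hio' _) (hio _ _) (norm_nonneg _) zero_le_one
        _ = 1 := mul_one 1
    have e0 : μ[Y 0] = (∫ ω, (if X 0 ω ≤ θ then (1:ℝ) else 0) *
          (if X 1 ω ≤ θ then (1:ℝ) else 0) ∂μ) +
        ∫ ω, (if θ < X 0 ω then (1:ℝ) else 0) * (if X 1 ω ≤ θs then (1:ℝ) else 0) ∂μ := by
      rw [← integral_add hi1 hi2]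
    have e1 : (∫ ω, (if X 0 ω ≤ θ then (1:ℝ) else 0) *
        (if X 1 ω ≤ θ then (1:ℝ) else 0) ∂μ) = F θ * F θ := by
      have := hP1.integral_mul_eq_mul_integral hm1.aestronglyMeasurable hm2.aestronglyMeasurable
      rw [show (fun ω => (if X 0 ω ≤ θ then (1:ℝ) else 0) * (if X 1 ω ≤ θ then (1:ℝ) else 0))
          = (fun ω => if X 0 ω ≤ θ then (1:ℝ) else 0) * (fun ω => if X 1 ω ≤ θ then (1:ℝ) else 0)
          from rfl, this, key 0 θ, key 1 θ, hmeasEq 1 θ, hF]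
    have e2 : (∫ ω, (if θ < X 0 ω then (1:ℝ) else 0) *
        (if X 1 ω ≤ θs then (1:ℝ) else 0) ∂μ) = (1 - F θ) * F θs := by
      have := hP2.integral_mul_eq_mul_integral hm3.aestronglyMeasurable hm4.aestronglyMeasurable
      rw [show (fun ω => (if θ < X 0 ω then (1:ℝ) else 0) * (if X 1 ω ≤ θs then (1:ℝ) else 0))
          = (fun ω => if θ < X 0 ω then (1:ℝ) else 0) * (fun ω => if X 1 ω ≤ θs then (1:ℝ) else 0)
          from rfl, this, key2, key 1 θs, hmeasEq 1 θs, hF θs]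
    rw [e0, e1, e2]; ring
  rw [← hmean]
  filter_upwards [hA, hB] with ω hAω hBω
  have hsplit : ∀ n : ℕ, ∑ j ∈ Finset.Icc 1 n,
        ((if X (j - 1) ω ≤ θ then (1 : ℝ) else 0) * (if X j ω ≤ θ then (1 : ℝ) else 0) +
         (if θ < X (j - 1) ω then (1 : ℝ) else 0) * (if X j ω ≤ θs then (1 : ℝ) else 0)) =
      (∑ k ∈ Finset.range ((n+1)/2), A k ω) + ∑ k ∈ Finset.range (n/2), B k ω := by
    intro n
    have h1 : ∀ j ∈ Finset.Icc 1 n,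
        ((if X (j - 1) ω ≤ θ then (1 : ℝ) else 0) * (if X j ω ≤ θ then (1 : ℝ) else 0) +
         (if θ < X (j - 1) ω then (1 : ℝ) else 0) * (if X j ω ≤ θs then (1 : ℝ) else 0)) =
        Y (j-1) ω := by
      intro j hj
      simp only [Finset.mem_Icc] at hj
      have hj1 : j - 1 + 1 = j := by omega
      simp only [hYdef, hfdef, hj1]
    rw [Finset.sum_congr rfl h1, aux_sum_Icc_split (fun j => Y (j-1) ω) n]
    have e1' : ∀ k : ℕ, 2*k+1-1 = 2*k := fun k => by omega
    have e2' : ∀ k : ℕ, 2*k+2-1 = 2*k+1 := fun k => by omega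
    simp only [e1', e2']
    rfl
  have hc : Tendsto (fun n : ℕ => (n+1)/2) atTop atTop :=
    tendsto_atTop_atTop.2 fun b => ⟨2*b, fun n hn => by omega⟩
  have hd : Tendsto (fun n : ℕ => n/2) atTop atTop :=
    tendsto_atTop_atTop.2 fun b => ⟨2*b, fun n hn => by omega⟩
  have hA2 : Tendsto (fun n : ℕ => ((((n:ℕ)+1)/2 : ℕ) : ℝ)⁻¹ *
      ∑ k ∈ Finset.range ((n+1)/2), A k ω) atTop (𝓝 (μ[A 0])) := by
    have := hAω.comp hc
    simpa [Function.comp_def, smul_eq_mul] using this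
  have hB2 : Tendsto (fun n : ℕ => (((n:ℕ)/2 : ℕ) : ℝ)⁻¹ *
      ∑ k ∈ Finset.range (n/2), B k ω) atTop (𝓝 (μ[B 0])) := by
    have := hBω.comp hd
    simpa [Function.comp_def, smul_eq_mul] using this
  have hr1 : Tendsto (fun n : ℕ => ((((n:ℕ)+1)/2 : ℕ) : ℝ) / n) atTop (𝓝 (1/2)) := by
    apply aux_tendsto_ratio_half
    · intro n
      have h : n ≤ 2 * ((n+1)/2) := by omega
      have h' : (n:ℝ) ≤ ((2 * ((n+1)/2 : ℕ) : ℕ) : ℝ) := by exact_mod_cast h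
      push_cast at h' ⊢
      linarith
    · intro n
      have h : 2 * ((n+1)/2) ≤ n + 1 := by omega
      have h' : ((2 * ((n+1)/2 : ℕ) : ℕ) : ℝ) ≤ ((n + 1 : ℕ) : ℝ) := by exact_mod_cast h
      push_cast at h' ⊢
      linarith
  have hr2 : Tendsto (fun n : ℕ => (((n:ℕ)/2 : ℕ) : ℝ) / n) atTop (𝓝 (1/2)) := by
    apply aux_tendsto_ratio_half
    · intro n
      have h : n ≤ 2 * (n/2) + 1 := by omega
      have h' : (n:ℝ) ≤ ((2 * (n/2 : ℕ) + 1 : ℕ) : ℝ) := by exact_mod_cast h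
      push_cast at h' ⊢
      linarith
    · intro n
      have h : 2 * (n/2) ≤ n + 1 := by omega
      have h' : ((2 * (n/2 : ℕ) : ℕ) : ℝ) ≤ ((n + 1 : ℕ) : ℝ) := by exact_mod_cast h
      push_cast at h' ⊢
      linarith
  have hmain : Tendsto (fun n : ℕ =>
      (((((n:ℕ)+1)/2 : ℕ) : ℝ) / n) * (((((n:ℕ)+1)/2 : ℕ) : ℝ)⁻¹ *
        ∑ k ∈ Finset.range ((n+1)/2), A k ω) +
      ((((n:ℕ)/2 : ℕ) : ℝ) / n) * ((((n:ℕ)/2 : ℕ) : ℝ)⁻¹ *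
        ∑ k ∈ Finset.range (n/2), B k ω)) atTop
      (𝓝 ((1/2) * μ[A 0] + (1/2) * μ[B 0])) :=
    (hr1.mul hA2).add (hr2.mul hB2)
  have hval : (1/2 : ℝ) * μ[A 0] + (1/2) * μ[B 0] = μ[Y 0] := by
    have hA0 : μ[A 0] = μ[Y 0] := rfl
    rw [hA0, hEB]; ring
  rw [hval] at hmain
  refine hmain.congr' ?_
  filter_upwards [eventually_ge_atTop 2] with n hn
  rw [hsplit n]
  have hcn : (0:ℝ) < ((((n:ℕ)+1)/2 : ℕ) : ℝ) := by
    exact_mod_cast (by omega : 0 < (n+1)/2)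
  have hdn : (0:ℝ) < (((n:ℕ)/2 : ℕ) : ℝ) := by
    exact_mod_cast (by omega : 0 < n/2)
  have hn0 : (0:ℝ) < (n:ℝ) := by exact_mod_cast (by omega : 0 < n)
  field_simp
end

section
/- Let (X_j)_{j ≥ 0} be an i.i.d. sequence of exponentially distributed random variables with rate λ > 0, let F(t) = 1 − e^{−λt}, and let 0 ≤ θ^s ≤ θ. Then, almost surely, (1/n)·∑_{j=1}^{n} [ 𝟙(X_{j−1} ≤ θ)·min(X_j, θ) + 𝟙(X_{j−1} > θ)·min(X_j, θ^s) ] → ( F(θ)² + (1 − F(θ))·F(θ^s) ) / λ as n → ∞; that is, under Poisson requests the per-request average cache occupancy (normalized size) of an object equals its hit rate divided by its arrival rate. -/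
open MeasureTheory ProbabilityTheory Filter Finset Real Topology

lemma myExp_ae_nonneg (r : ℝ) : ∀ᵐ x ∂(expMeasure r), 0 ≤ x := by
  rw [ae_iff]
  have hs : {x : ℝ | ¬ 0 ≤ x} = Set.Iio 0 := by ext x; simp
  rw [hs]
  show gammaMeasure 1 r (Set.Iio 0) = 0
  rw [gammaMeasure, withDensity_apply _ measurableSet_Iio]
  rw [setLIntegral_congr_fun_ae measurableSet_Iio
    (ae_of_all _ (fun x (hx : x < 0) => gammaPDF_of_neg hx))]
  simp

lemma myExp_Iic {r : ℝ} (hr : 0 < r) {t : ℝ} (ht : 0 ≤ t) :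
    ((expMeasure r) (Set.Iic t)).toReal = 1 - Real.exp (-(r * t)) := by
  have : IsProbabilityMeasure (expMeasure r) := isProbabilityMeasure_expMeasure hr
  have h1 : ((expMeasure r) (Set.Iic t)).toReal = cdf (expMeasure r) t :=
    (cdf_eq_real (expMeasure r) t).symm
  rw [h1]
  have h2 := cdf_expMeasure_eq hr t
  rw [h2, if_pos ht]

lemma myExp_Ioi {r : ℝ} (hr : 0 < r) {t : ℝ} (ht : 0 ≤ t) :
    ((expMeasure r) (Set.Ioi t)).toReal = Real.exp (-(r * t)) := by
  have : IsProbabilityMeasure (expMeasure r) := isProbabilityMeasure_expMeasure hr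
  have hc : Set.Ioi t = (Set.Iic t)ᶜ := by simp
  rw [hc, prob_compl_eq_one_sub measurableSet_Iic,
    ENNReal.toReal_sub_of_le prob_le_one ENNReal.one_ne_top, ENNReal.toReal_one,
    myExp_Iic hr ht]
  ring

lemma myMin_integrable {r : ℝ} (hr : 0 < r) {t : ℝ} (ht : 0 ≤ t) :
    Integrable (fun b => min b t) (expMeasure r) := by
  have : IsProbabilityMeasure (expMeasure r) := isProbabilityMeasure_expMeasure hr
  refine Integrable.mono' (integrable_const t)
    (measurable_id.min measurable_const).aestronglyMeasurable ?_
  filter_upwards [myExp_ae_nonneg r] with b hb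
  rw [Real.norm_eq_abs, abs_of_nonneg (le_min hb ht)]
  exact min_le_right _ _

lemma myExp_min_integral {r : ℝ} (hr : 0 < r) {t : ℝ} (ht : 0 ≤ t) :
    ∫ b, min b t ∂(expMeasure r) = (1 - Real.exp (-(r * t))) / r := by
  have : IsProbabilityMeasure (expMeasure r) := isProbabilityMeasure_expMeasure hr
  have hnn : 0 ≤ᵐ[expMeasure r] (fun b => min b t) := by
    filter_upwards [myExp_ae_nonneg r] with b hb
    exact le_min hb ht
  rw [(myMin_integrable hr ht).integral_eq_integral_meas_lt hnn]
  have hset : ∀ s : ℝ, {b : ℝ | s < min b t} = if s < t then Set.Ioi s else ∅ := by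
    intro s
    split_ifs with h <;> ext b <;> simp [lt_min_iff, h]
  have hcongr : ∀ s ∈ Set.Ioi (0:ℝ),
      ((expMeasure r) {b : ℝ | s < min b t}).toReal
        = (Set.Iio t).indicator (fun s => Real.exp (-(r * s))) s := by
    intro s hs
    rw [hset s]
    by_cases h : s < t
    · rw [if_pos h, Set.indicator_of_mem (Set.mem_Iio.mpr h), myExp_Ioi hr (le_of_lt hs)]
    · rw [if_neg h, Set.indicator_of_notMem (by simpa using h)]
      simp
  simp only [measureReal_def]
  rw [setIntegral_congr_fun measurableSet_Ioi hcongr,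
    setIntegral_indicator measurableSet_Iio]
  have hinter : Set.Ioi (0:ℝ) ∩ Set.Iio t = Set.Ioo 0 t := rfl
  rw [hinter, ← integral_Ioc_eq_integral_Ioo, ← intervalIntegral.integral_of_le ht]
  have hderiv : ∀ x ∈ Set.uIcc (0:ℝ) t,
      HasDerivAt (fun a => -Real.exp (-(r * a)) / r) (Real.exp (-(r * x))) x := by
    intro x _
    have h := (hasDerivAt_neg_exp_mul_exp (r := r) (x := x)).div_const r
    rwa [mul_div_cancel_left₀ _ hr.ne'] at h
  have hcont : Continuous (fun x : ℝ => Real.exp (-(r * x))) := by fun_prop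
  rw [intervalIntegral.integral_eq_sub_of_hasDerivAt hderiv (hcont.intervalIntegrable _ _)]
  simp [Real.exp_zero]
  ring

lemma myExp_ind_le {r : ℝ} (hr : 0 < r) {t : ℝ} (ht : 0 ≤ t) :
    ∫ a, (if a ≤ t then (1:ℝ) else 0) ∂(expMeasure r) = 1 - Real.exp (-(r * t)) := by
  have heq : (fun a : ℝ => (if a ≤ t then (1:ℝ) else 0))
      = (Set.Iic t).indicator (1 : ℝ → ℝ) := by
    ext a; simp [Set.indicator_apply]
  rw [heq]
  rw [integral_indicator_one measurableSet_Iic, measureReal_def, myExp_Iic hr ht]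

lemma myExp_ind_gt {r : ℝ} (hr : 0 < r) {t : ℝ} (ht : 0 ≤ t) :
    ∫ a, (if t < a then (1:ℝ) else 0) ∂(expMeasure r) = Real.exp (-(r * t)) := by
  have heq : (fun a : ℝ => (if t < a then (1:ℝ) else 0))
      = (Set.Ioi t).indicator (1 : ℝ → ℝ) := by
    ext a; simp [Set.indicator_apply]
  rw [heq]
  rw [integral_indicator_one measurableSet_Ioi, measureReal_def, myExp_Ioi hr ht]

lemma myLinHalf (c : ℝ) : Tendsto (fun n : ℕ => ((n:ℝ) + c)/(2*(n:ℝ))) atTop (𝓝 (1/2)) := by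
  have h : Tendsto (fun n : ℕ => 1/2 + (c/2) * (1/(n:ℝ))) atTop (𝓝 (1/2 + (c/2) * 0)) :=
    tendsto_const_nhds.add (tendsto_one_div_atTop_nhds_zero_nat.const_mul (c/2))
  rw [mul_zero, add_zero] at h
  apply h.congr'
  filter_upwards [eventually_ge_atTop 1] with n hn
  have hn' : (0:ℝ) < n := by exact_mod_cast hn
  field_simp

lemma myHalfLimit (u : ℕ → ℝ) (E : ℝ) (a : ℕ → ℕ)
    (hu : Tendsto (fun n : ℕ => (∑ i ∈ Finset.range n, u i)/(n:ℝ)) atTop (𝓝 E))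
    (ha2 : ∀ n, 2 * a n ≤ n + 2) (ha1 : ∀ n, n ≤ 2 * a n + 1) :
    Tendsto (fun n : ℕ => (∑ i ∈ Finset.range (a n), u i)/(n:ℝ)) atTop (𝓝 (E/2)) := by
  have hatop : Tendsto a atTop atTop := by
    rw [tendsto_atTop]
    intro b
    rw [eventually_atTop]
    exact ⟨2*b+1, fun n hn => by have := ha1 n; omega⟩
  have hcomp := hu.comp hatop
  have hfrac : Tendsto (fun n : ℕ => ((a n : ℝ))/(n:ℝ)) atTop (𝓝 (1/2)) := by
    apply tendsto_of_tendsto_of_tendsto_of_le_of_le' (myLinHalf (-1)) (myLinHalf 2)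
    · filter_upwards [eventually_ge_atTop 1] with n hn
      have hn' : (1:ℝ) ≤ n := by exact_mod_cast hn
      have h1 : (n:ℝ) ≤ 2*(a n : ℝ) + 1 := by exact_mod_cast ha1 n
      rw [div_le_div_iff₀ (by linarith) (by linarith)]
      nlinarith
    · filter_upwards [eventually_ge_atTop 1] with n hn
      have hn' : (1:ℝ) ≤ n := by exact_mod_cast hn
      have h2 : 2*(a n : ℝ) ≤ (n:ℝ) + 2 := by exact_mod_cast ha2 n
      rw [div_le_div_iff₀ (by linarith) (by linarith)]
      nlinarith
  have hmul := hcomp.mul hfrac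
  have hkey : ∀ n : ℕ, ((fun n => (∑ i ∈ Finset.range n, u i)/(n:ℝ)) ∘ a) n * ((a n : ℝ)/(n:ℝ))
      = (∑ i ∈ Finset.range (a n), u i)/(n:ℝ) := by
    intro n
    simp only [Function.comp_apply]
    by_cases ha : (a n : ℝ) = 0
    · have : a n = 0 := by exact_mod_cast ha
      simp [this]
    · rw [div_mul_div_comm, mul_comm (∑ i ∈ Finset.range (a n), u i) ((a n : ℝ))]
      rw [mul_div_mul_left _ _ ha]
  have := hmul.congr hkey
  convert this using 2
  ring

lemma myAvgSplit (u v Y : ℕ → ℝ) (E : ℝ)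
    (hu : Tendsto (fun n : ℕ => (∑ i ∈ Finset.range n, u i)/(n:ℝ)) atTop (𝓝 E))
    (hv : Tendsto (fun n : ℕ => (∑ i ∈ Finset.range n, v i)/(n:ℝ)) atTop (𝓝 E))
    (hYu : ∀ k, Y (2*k+1) = u k) (hYv : ∀ k, Y (2*k+2) = v k) :
    Tendsto (fun n : ℕ => (1/(n:ℝ)) * ∑ j ∈ Finset.Icc 1 n, Y j) atTop (𝓝 E) := by
  have hS : ∀ n : ℕ, ∑ j ∈ Finset.Icc 1 n, Y j
      = (∑ i ∈ Finset.range ((n+1)/2), u i) + (∑ i ∈ Finset.range (n/2), v i) := by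
    intro n
    induction n with
    | zero => simp
    | succ n ih =>
      have hins : Finset.Icc 1 (n+1) = insert (n+1) (Finset.Icc 1 n) := by
        ext x; simp [Finset.mem_Icc]; omega
      rw [hins, Finset.sum_insert (by simp)]
      rcases Nat.even_or_odd n with ⟨m, hm⟩ | ⟨m, hm⟩
      · subst hm
        have e1 : (m + m + 1 + 1)/2 = m + 1 := by omega
        have e2 : (m + m + 1)/2 = m := by omega
        have e3 : (m + m)/2 = m := by omega
        have e4 : (m + m + 1) = 2 * m + 1 := by omega
        rw [ih, e1, e2, e3, Finset.sum_range_succ, e4, hYu m]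
        ring
      · subst hm
        have e1 : (2*m + 1 + 1 + 1)/2 = m + 1 := by omega
        have e2 : (2*m + 1 + 1)/2 = m + 1 := by omega
        have e3 : (2*m + 1)/2 = m := by omega
        rw [ih, e1, e2, e3, hYv m, Finset.sum_range_succ v m]
        ring
  have hhu := myHalfLimit u E (fun n => (n+1)/2) hu (fun n => by show 2*((n+1)/2) ≤ n+2; omega) (fun n => by show n ≤ 2*((n+1)/2)+1; omega)
  have hhv := myHalfLimit v E (fun n => n/2) hv (fun n => by show 2*(n/2) ≤ n+2; omega) (fun n => by show n ≤ 2*(n/2)+1; omega)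
  have hadd := hhu.add hhv
  rw [add_halves] at hadd
  apply hadd.congr
  intro n
  rw [hS n, one_div_mul_eq_div, add_div]

/-- for i.i.d. exponential(λ) inter-request times and TTLs `0 ≤ θˢ ≤ θ`,
the per-request average cache occupancy of the two-level TTL cache converges almost
surely to its hit rate divided by λ, i.e. to `(F(θ)² + (1 - F(θ)) F(θˢ))/λ` where
`F(t) = 1 - e^{-λt}`. -/
theorem poisson_size_equals_hit_rate_over_rate {Ω : Type*} [MeasurableSpace Ω]
    (μ : Measure Ω) [IsProbabilityMeasure μ]
    (X : ℕ → Ω → ℝ) (hmeas : ∀ j, Measurable (X j))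
    (hindep : iIndepFun X μ)
    (hident : ∀ j, IdentDistrib (X j) (X 0) μ μ)
    (lam0 : ℝ) (hlam0 : 0 < lam0)
    (hlaw : Measure.map (X 0) μ = expMeasure lam0)
    (F : ℝ → ℝ) (hF : ∀ t, F t = 1 - Real.exp (-lam0 * t))
    (θ θs : ℝ) (h0 : 0 ≤ θs) (h1 : θs ≤ θ) :
    ∀ᵐ ω ∂μ, Tendsto (fun n : ℕ => (1 / (n : ℝ)) * ∑ j ∈ Finset.Icc 1 n,
        ((if X (j - 1) ω ≤ θ then (1 : ℝ) else 0) * min (X j ω) θ +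
         (if θ < X (j - 1) ω then (1 : ℝ) else 0) * min (X j ω) θs))
      atTop (nhds ((F θ ^ 2 + (1 - F θ) * F θs) / lam0)) := by
  have hθ : 0 ≤ θ := le_trans h0 h1
  set ν := expMeasure lam0 with hν
  have hprob : IsProbabilityMeasure ν := isProbabilityMeasure_expMeasure hlam0
  set f : ℝ × ℝ → ℝ := fun p =>
    (if p.1 ≤ θ then (1:ℝ) else 0) * min p.2 θ +
    (if θ < p.1 then (1:ℝ) else 0) * min p.2 θs with hf_def
  have hfm : Measurable f := by
    apply Measurable.add
    · exact (Measurable.ite (measurableSet_le measurable_fst measurable_const)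
        measurable_const measurable_const).mul (measurable_snd.min measurable_const)
    · exact (Measurable.ite (measurableSet_lt measurable_const measurable_fst)
        measurable_const measurable_const).mul (measurable_snd.min measurable_const)
  have hmapX : ∀ i, Measure.map (X i) μ = ν := fun i => (hident i).map_eq.trans hlaw
  have hpairmap : ∀ i j, i ≠ j →
      Measure.map (fun ω => (X i ω, X j ω)) μ = ν.prod ν := by
    intro i j hij
    have h := (indepFun_iff_map_prod_eq_prod_map_map (hmeas i).aemeasurable
      (hmeas j).aemeasurable).1 (hindep.indepFun hij)
    rw [h, hmapX i, hmapX j]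
  -- integrability pieces
  have hθint : Integrable (fun b => min b θ) ν := myMin_integrable hlam0 hθ
  have hθsint : Integrable (fun b => min b θs) ν := myMin_integrable hlam0 h0
  have hind1 : Integrable (fun a : ℝ => if a ≤ θ then (1:ℝ) else 0) ν := by
    refine Integrable.mono' (integrable_const (1:ℝ))
      ((Measurable.ite (measurableSet_le measurable_id measurable_const)
        measurable_const measurable_const).aestronglyMeasurable) ?_
    filter_upwards with a
    split_ifs <;> simp
  have hind2 : Integrable (fun a : ℝ => if θ < a then (1:ℝ) else 0) ν := by
    refine Integrable.mono' (integrable_const (1:ℝ))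
      ((Measurable.ite (measurableSet_lt measurable_const measurable_id)
        measurable_const measurable_const).aestronglyMeasurable) ?_
    filter_upwards with a
    split_ifs <;> simp
  have hu : Integrable (fun p : ℝ × ℝ =>
      (if p.1 ≤ θ then (1:ℝ) else 0) * min p.2 θ) (ν.prod ν) := hind1.mul_prod hθint
  have hv : Integrable (fun p : ℝ × ℝ =>
      (if θ < p.1 then (1:ℝ) else 0) * min p.2 θs) (ν.prod ν) := hind2.mul_prod hθsint
  have hfint : Integrable f (ν.prod ν) := hu.add hv
  set T : ℝ := (F θ ^ 2 + (1 - F θ) * F θs) / lam0 with hT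
  have hEf : ∫ p, f p ∂(ν.prod ν) = T := by
    rw [hf_def]
    rw [integral_add hu hv,
      integral_prod_mul (fun a : ℝ => if a ≤ θ then (1:ℝ) else 0) (fun b : ℝ => min b θ),
      integral_prod_mul (fun a : ℝ => if θ < a then (1:ℝ) else 0) (fun b : ℝ => min b θs),
      myExp_ind_le hlam0 hθ, myExp_ind_gt hlam0 hθ,
      myExp_min_integral hlam0 hθ, myExp_min_integral hlam0 h0]
    rw [hT, hF, hF]
    simp only [neg_mul]
    field_simp
    ring
  set A : ℕ → Ω → ℝ := fun k ω => f (X (2*k) ω, X (2*k+1) ω) with hA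
  set B : ℕ → Ω → ℝ := fun k ω => f (X (2*k+1) ω, X (2*k+2) ω) with hB
  -- A part
  have hidentA : ∀ k, IdentDistrib (A k) (A 0) μ μ := by
    intro k
    have hp : IdentDistrib (fun ω => (X (2*k) ω, X (2*k+1) ω))
        (fun ω => (X (2*0) ω, X (2*0+1) ω)) μ μ :=
      ⟨((hmeas _).prodMk (hmeas _)).aemeasurable,
       ((hmeas _).prodMk (hmeas _)).aemeasurable,
       by rw [hpairmap _ _ (by omega), hpairmap _ _ (by omega)]⟩
    exact hp.comp hfm
  have hpairA : Pairwise (Function.onFun (IndepFun · · μ) A) := by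
    intro k l hkl
    exact (hindep.indepFun_prodMk_prodMk hmeas (2*k) (2*k+1) (2*l) (2*l+1)
      (by omega) (by omega) (by omega) (by omega)).comp hfm hfm
  have hintA : Integrable (A 0) μ := by
    have h := (integrable_map_measure hfm.aestronglyMeasurable
      ((hmeas _).prodMk (hmeas _)).aemeasurable).1
      (by rw [hpairmap (2*0) (2*0+1) (by omega)]; exact hfint)
    exact h
  have hEA : μ[A 0] = T := by
    have h := integral_map (μ := μ) ((hmeas (2*0)).prodMk (hmeas (2*0+1))).aemeasurable
      hfm.aestronglyMeasurable
    rw [hpairmap (2*0) (2*0+1) (by omega)] at h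
    rw [← hEf, ← h]
  have hSA := strong_law_ae_real A hintA hpairA hidentA
  rw [hEA] at hSA
  -- B part
  have hidentB : ∀ k, IdentDistrib (B k) (B 0) μ μ := by
    intro k
    have hp : IdentDistrib (fun ω => (X (2*k+1) ω, X (2*k+2) ω))
        (fun ω => (X (2*0+1) ω, X (2*0+2) ω)) μ μ :=
      ⟨((hmeas _).prodMk (hmeas _)).aemeasurable,
       ((hmeas _).prodMk (hmeas _)).aemeasurable,
       by rw [hpairmap _ _ (by omega), hpairmap _ _ (by omega)]⟩
    exact hp.comp hfm
  have hpairB : Pairwise (Function.onFun (IndepFun · · μ) B) := by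
    intro k l hkl
    exact (hindep.indepFun_prodMk_prodMk hmeas (2*k+1) (2*k+2) (2*l+1) (2*l+2)
      (by omega) (by omega) (by omega) (by omega)).comp hfm hfm
  have hintB : Integrable (B 0) μ := by
    have h := (integrable_map_measure hfm.aestronglyMeasurable
      ((hmeas _).prodMk (hmeas _)).aemeasurable).1
      (by rw [hpairmap (2*0+1) (2*0+2) (by omega)]; exact hfint)
    exact h
  have hEB : μ[B 0] = T := by
    have h := integral_map (μ := μ) ((hmeas (2*0+1)).prodMk (hmeas (2*0+2))).aemeasurable
      hfm.aestronglyMeasurable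
    rw [hpairmap (2*0+1) (2*0+2) (by omega)] at h
    rw [← hEf, ← h]
  have hSB := strong_law_ae_real B hintB hpairB hidentB
  rw [hEB] at hSB
  filter_upwards [hSA, hSB] with ω hAω hBω
  have := myAvgSplit (fun k => A k ω) (fun k => B k ω)
    (fun j => (if X (j - 1) ω ≤ θ then (1 : ℝ) else 0) * min (X j ω) θ +
         (if θ < X (j - 1) ω then (1 : ℝ) else 0) * min (X j ω) θs) T
    hAω hBω
    (fun k => rfl) (fun k => rfl)
  exact this
end
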